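/- arXiv:1702.05741 — 8 statements merged into one kernel-verified Lean document; each statement's English description precedes it below -/
import Mathlib

section
/- For any linear code, the function Φ(x) (the minimum size of the union of x regenerating sets having a nontrivial union) satisfies Φ(x+1) ≥ Φ(x) + 1 for all x where both are defined; consequently x ↦ Φ(x) − x is nondecreasing. -/
open scoped Classical

/-- `R` is a regenerating set of coordinate `i` for the code with generator matrix `G`:
`i ∈ R` and the `i`-th column of `G` is a linear combination of the columns indexed by `R \ {i}`. -/
def regenSet {𝔽 : Type*} [Field 𝔽] {m n : ℕ} (G : Matrix (Fin m) (Fin n) 𝔽)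
    (i : Fin n) (R : Finset (Fin n)) : Prop :=
  i ∈ R ∧ (fun t => G t i) ∈ Submodule.span 𝔽 ((fun j => fun t => G t j) '' ↑(R.erase i))

/-- A sequence of regenerating sets `R j` of coordinates `l j` with a nontrivial union. -/
def ntUnion {𝔽 : Type*} [Field 𝔽] {m n : ℕ} (G : Matrix (Fin m) (Fin n) 𝔽) (x : ℕ)
    (l : Fin x → Fin n) (R : Fin x → Finset (Fin n)) : Prop :=
  (∀ j, regenSet G (l j) (R j)) ∧ ∀ j j' : Fin x, j' < j → l j ∉ R j'

/-- `Φ(x)`: minimum size of the union of `x` regenerating sets having a nontrivial union. -/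
noncomputable def Phi {𝔽 : Type*} [Field 𝔽] {m n : ℕ} (G : Matrix (Fin m) (Fin n) 𝔽)
    (x : ℕ) : ℕ :=
  sInf {c | ∃ (l : Fin x → Fin n) (R : Fin x → Finset (Fin n)),
    ntUnion G x l R ∧ (Finset.univ.biUnion R).card = c}

/-- `ρ = max { x : Φ(x) − x < k }` (over those `x` where `Φ` is defined). -/
noncomputable def rho {𝔽 : Type*} [Field 𝔽] {m n : ℕ} (G : Matrix (Fin m) (Fin n) 𝔽)
    (k : ℕ) : ℕ :=
  sSup {x | (∃ (l : Fin x → Fin n) (R : Fin x → Finset (Fin n)), ntUnion G x l R) ∧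
    Phi G x - x < k}

/-- The linear code generated by the rows of `G`. -/
def rowCode {𝔽 : Type*} [Field 𝔽] {m n : ℕ} (G : Matrix (Fin m) (Fin n) 𝔽) :
    Submodule 𝔽 (Fin n → 𝔽) :=
  Submodule.span 𝔽 (Set.range fun t => G t)

/-- Hamming weight of a vector. -/
noncomputable def wt {𝔽 : Type*} [Field 𝔽] {n : ℕ} (c : Fin n → 𝔽) : ℕ :=
  (Finset.univ.filter fun j => c j ≠ 0).card

/-- Minimum (Hamming) distance of a linear code. -/
noncomputable def minDist {𝔽 : Type*} [Field 𝔽] {n : ℕ} (C : Submodule 𝔽 (Fin n → 𝔽)) : ℕ :=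
  sInf {w | ∃ c ∈ C, c ≠ 0 ∧ wt c = w}

/-- Membership in the dual code `C⊥`. -/
def inDual {𝔽 : Type*} [Field 𝔽] {n : ℕ} (C : Submodule 𝔽 (Fin n → 𝔽))
    (e : Fin n → 𝔽) : Prop :=
  ∀ c ∈ C, ∑ j, e j * c j = 0

/-- Ceiling of natural division: `cdiv a b = ⌈a / b⌉`. -/
def cdiv (a b : ℕ) : ℕ := (a + b - 1) / b

/-- All coordinates in `T` have `(r, δ)`-locality (Definition 3.1/3.2). -/
def hasLocality {𝔽 : Type*} [Field 𝔽] {m n : ℕ} (G : Matrix (Fin m) (Fin n) 𝔽)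
    (T : Finset (Fin n)) (r δ : ℕ) : Prop :=
  ∀ ι ∈ T, ∃ S ⊆ T, ι ∈ S ∧ δ ≤ S.card ∧ S.card ≤ r + δ - 1 ∧
    ∀ E ⊆ S, E.card = δ - 1 → ∀ j ∈ E, regenSet G j ((S \ E) ∪ {j})
/-- `Φ(x+1) ≥ Φ(x) + 1` wherever both are defined; consequently
`x ↦ Φ(x) − x` is nondecreasing. -/
theorem phi_strict_mono {𝔽 : Type*} [Field 𝔽] {m n : ℕ} (G : Matrix (Fin m) (Fin n) 𝔽)
    (x : ℕ)
    (hdefx : ∃ (l : Fin x → Fin n) (R : Fin x → Finset (Fin n)), ntUnion G x l R)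
    (hdefx1 : ∃ (l : Fin (x+1) → Fin n) (R : Fin (x+1) → Finset (Fin n)), ntUnion G (x+1) l R) :
    Phi G x + 1 ≤ Phi G (x+1) ∧ Phi G x - x ≤ Phi G (x+1) - (x+1) := by
  have hne : {c | ∃ (l : Fin (x+1) → Fin n) (R : Fin (x+1) → Finset (Fin n)),
      ntUnion G (x+1) l R ∧ (Finset.univ.biUnion R).card = c}.Nonempty := by
    obtain ⟨l, R, h⟩ := hdefx1
    exact ⟨_, l, R, h, rfl⟩
  obtain ⟨l, R, hnt, hcard⟩ := Nat.sInf_mem hne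
  have hnt' : ntUnion G x (fun j => l j.castSucc) (fun j => R j.castSucc) := by
    refine ⟨fun j => hnt.1 _, fun j j' hlt => hnt.2 _ _ ?_⟩
    simpa using hlt
  have hlast_mem : l (Fin.last x) ∈ Finset.univ.biUnion R :=
    Finset.mem_biUnion.2 ⟨Fin.last x, Finset.mem_univ _, (hnt.1 _).1⟩
  have hsub : Finset.univ.biUnion (fun j : Fin x => R j.castSucc) ⊆
      (Finset.univ.biUnion R).erase (l (Fin.last x)) := by
    intro a ha
    obtain ⟨j, _, haj⟩ := Finset.mem_biUnion.1 ha
    refine Finset.mem_erase.2 ⟨?_, Finset.mem_biUnion.2 ⟨_, Finset.mem_univ _, haj⟩⟩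
    rintro rfl
    exact hnt.2 (Fin.last x) j.castSucc (Fin.castSucc_lt_last j) haj
  have h1 : Phi G x ≤ (Finset.univ.biUnion (fun j : Fin x => R j.castSucc)).card :=
    Nat.sInf_le ⟨_, _, hnt', rfl⟩
  have h2 := Finset.card_le_card hsub
  rw [Finset.card_erase_of_mem hlast_mem] at h2
  have h3 : 1 ≤ (Finset.univ.biUnion R).card := Finset.card_pos.2 ⟨_, hlast_mem⟩
  have hPhi : (Finset.univ.biUnion R).card = Phi G (x+1) := hcard
  constructor <;> omega
end

section
/- If R_1,…,R_x are regenerating sets of coordinates l_1,…,l_x with a nontrivial union, then the corresponding dual codewords e_1,…,e_x (with supp(e_j) = R_j) are linearly independent over F_q; in particular x ≤ n − k. -/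
section Aux
variable {𝔽 : Type*} [Field 𝔽] {n : ℕ}

/-- The standard dot-product bilinear form on `Fin n → 𝔽`. -/
noncomputable def dotForm (𝔽 : Type*) [Field 𝔽] (n : ℕ) :
    LinearMap.BilinForm 𝔽 (Fin n → 𝔽) :=
  LinearMap.mk₂ 𝔽 (fun v w => ∑ i, v i * w i)
    (fun a b c => by simp [add_mul, Finset.sum_add_distrib])
    (fun a b c => by simp [Finset.mul_sum, mul_assoc])
    (fun a b c => by simp [mul_add, Finset.sum_add_distrib])
    (fun a b c => by
      simp [Finset.mul_sum, mul_left_comm])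

lemma dotForm_apply (v w : Fin n → 𝔽) : dotForm 𝔽 n v w = ∑ i, v i * w i := rfl

lemma dotForm_isRefl : (dotForm 𝔽 n).IsRefl := by
  intro v w h
  rw [dotForm_apply] at h ⊢
  simpa [mul_comm] using h

lemma dotForm_nondeg : (dotForm 𝔽 n).Nondegenerate := by
  constructor
  all_goals
    intro v hv
    ext i
    have := hv (Pi.single i 1)
    rw [dotForm_apply] at this
    simpa [Pi.single_apply, Finset.sum_ite_eq'] using this

end Aux
open scoped Classical

set_option maxHeartbeats 1000000 in
/-- dual codewords supported on regenerating sets with a nontrivial union are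
linearly independent; in particular `x ≤ n − k`. -/
theorem dual_words_linearIndependent {𝔽 : Type*} [Field 𝔽] {m n : ℕ}
    (G : Matrix (Fin m) (Fin n) 𝔽) (k x : ℕ)
    (hk : k = Module.finrank 𝔽 (rowCode G))
    (l : Fin x → Fin n) (R : Fin x → Finset (Fin n)) (hnt : ntUnion G x l R)
    (e : Fin x → (Fin n → 𝔽)) (he : ∀ j, inDual (rowCode G) (e j))
    (hsupp : ∀ j, Function.support (e j) = ↑(R j)) :
    LinearIndependent 𝔽 e ∧ x ≤ n - k := by
  have hRj : ∀ j, l j ∈ R j := fun j => (hnt.1 j).1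
  have hlt : ∀ j j' : Fin x, j' < j → l j ∉ R j' := hnt.2
  have hej : ∀ j, e j (l j) ≠ 0 := by
    intro j
    have : (l j) ∈ Function.support (e j) := by
      rw [hsupp j]; exact_mod_cast hRj j
    exact this
  have hez : ∀ j j' : Fin x, j' < j → e j' (l j) = 0 := by
    intro j j' h
    by_contra h0
    exact hlt j j' h (by
      have : l j ∈ Function.support (e j') := h0
      rw [hsupp j'] at this; exact_mod_cast this)
  have hli : LinearIndependent 𝔽 e := by
    rw [Fintype.linearIndependent_iff]
    intro g hg
    by_contra hne
    push_neg at hne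
    obtain ⟨i0, hi0⟩ := hne
    classical
    set s : Finset (Fin x) := Finset.univ.filter (fun i => g i ≠ 0) with hs
    have hsne : s.Nonempty := ⟨i0, by simp [hs, hi0]⟩
    set j := s.max' hsne with hj
    have hgj : g j ≠ 0 := (Finset.mem_filter.mp (s.max'_mem hsne)).2
    have hev := congrFun hg (l j)
    simp only [Finset.sum_apply, Pi.smul_apply, smul_eq_mul, Pi.zero_apply] at hev
    have hz : ∀ i ∈ Finset.univ, i ≠ j → g i * e i (l j) = 0 := by
      intro i _ hij
      rcases lt_trichotomy i j with h | h | h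
      · rw [hez j i h, mul_zero]
      · exact absurd h hij
      · have : g i = 0 := by
          by_contra h0
          exact absurd (s.le_max' i (by simp [hs, h0])) (not_le.mpr h)
        rw [this, zero_mul]
    rw [Finset.sum_eq_single_of_mem j (Finset.mem_univ j) hz] at hev
    exact hgj ((mul_eq_zero.mp hev).resolve_right (hej j))
  refine ⟨hli, ?_⟩
  -- the `e j` lie in the orthogonal complement of the row code
  have hmem : ∀ j, e j ∈ (dotForm 𝔽 n).orthogonal (rowCode G) := by
    intro j c hc
    have := he j c hc
    rw [dotForm_apply]
    simpa [mul_comm] using this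
  have hfin : Module.finrank 𝔽 ((dotForm 𝔽 n).orthogonal (rowCode G)) = n - k := by
    rw [LinearMap.BilinForm.finrank_orthogonal dotForm_nondeg, hk]
    congr 1
    simp [Module.finrank_pi]
  have hspan : Submodule.span 𝔽 (Set.range e) ≤ (dotForm 𝔽 n).orthogonal (rowCode G) := by
    rw [Submodule.span_le]
    rintro _ ⟨j, rfl⟩
    exact hmem j
  have hcard : Module.finrank 𝔽 (Submodule.span 𝔽 (Set.range e)) = x := by
    rw [finrank_span_eq_card hli, Fintype.card_fin]
  have := Submodule.finrank_mono hspan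
  rw [hcard, hfin] at this
  exact this
end

section
/- For an [n,k,d]_q linear code, d ≤ n − k + 1 − ρ, where ρ = max{x : Φ(x) − x < k}. -/
open scoped Classical

open Submodule Module Matrix

section Aux
variable {𝔽 : Type*} [Field 𝔽] {m n : ℕ}

-- row rank = column rank
lemma rowcol {α β : Type*} [Fintype α] [Fintype β] (M : Matrix α β 𝔽) :
    finrank 𝔽 (span 𝔽 (Set.range M)) = finrank 𝔽 (span 𝔽 (Set.range Mᵀ)) := by
  have h1 : Mᵀ.rank = finrank 𝔽 (span 𝔽 (Set.range M)) := by
    rw [Matrix.rank, Matrix.range_mulVecLin]; rfl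
  have h2 : M.rank = finrank 𝔽 (span 𝔽 (Set.range Mᵀ)) := by
    rw [Matrix.rank, Matrix.range_mulVecLin]; rfl
  rw [← h1, ← h2, Matrix.rank_transpose]

lemma finrank_span_insert' {V : Type*} [AddCommGroup V] [Module 𝔽 V]
    [FiniteDimensional 𝔽 V] {x : V} {s : Set V} (hx : x ∉ span 𝔽 s) :
    finrank 𝔽 (span 𝔽 (insert x s)) = finrank 𝔽 (span 𝔽 s) + 1 := by
  have hx0 : x ≠ 0 := fun h => hx (h ▸ zero_mem _)
  have hd : Disjoint (span 𝔽 s) (𝔽 ∙ x) :=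
    Submodule.disjoint_span_singleton.mpr (fun h => absurd h hx)
  have := Submodule.finrank_sup_add_finrank_inf_eq (span 𝔽 s) (𝔽 ∙ x)
  rw [disjoint_iff.mp hd, finrank_bot, finrank_span_singleton hx0] at this
  rw [span_insert, sup_comm]
  omega

lemma exists_codeword (G : Matrix (Fin m) (Fin n) 𝔽) (T : Finset (Fin n))
    (h : finrank 𝔽 (span 𝔽 ((fun j => fun t => G t j) '' ↑T)) < finrank 𝔽 (rowCode G)) :
    ∃ c ∈ rowCode G, c ≠ 0 ∧ ∀ j ∈ T, c j = 0 := by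
  set π : (Fin n → 𝔽) →ₗ[𝔽] ({x // x ∈ T} → 𝔽) :=
    LinearMap.funLeft 𝔽 𝔽 (Subtype.val : {x // x ∈ T} → Fin n) with hπ
  set f := π.comp (rowCode G).subtype with hf
  set M : Matrix (Fin m) {x // x ∈ T} 𝔽 := fun t s => G t s.val with hM
  have hrange : LinearMap.range f = (rowCode G).map π := by
    rw [hf, LinearMap.range_comp, Submodule.range_subtype]
  have hmap : (rowCode G).map π = span 𝔽 (Set.range M) := by
    rw [rowCode, Submodule.map_span, ← Set.range_comp]
    congr 1
  have hMT : Set.range Mᵀ = (fun j => fun t => G t j) '' ↑T := by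
    have h2 : Mᵀ = (fun j => fun t => G t j) ∘ (Subtype.val : {x // x ∈ T} → Fin n) := rfl
    rw [h2, Set.range_comp, Subtype.range_coe_subtype]
    rfl
  have hr : finrank 𝔽 (LinearMap.range f) < finrank 𝔽 (rowCode G) := by
    rw [hrange, hmap, rowcol, hMT]; exact h
  have hrn := LinearMap.finrank_range_add_finrank_ker f
  have hker : LinearMap.ker f ≠ ⊥ := by
    intro hb
    rw [hb, finrank_bot, Nat.add_zero] at hrn
    rw [hrn] at hr
    exact lt_irrefl _ hr
  obtain ⟨v, hv, hv0⟩ := Submodule.exists_mem_ne_zero_of_ne_bot hker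
  refine ⟨v.val, v.property, fun h0 => hv0 (Subtype.ext h0), fun j hj => ?_⟩
  have hz : π v.val = 0 := hv
  exact congrFun hz ⟨j, hj⟩

end Aux

section Aux2
variable {𝔽 : Type*} [Field 𝔽] {m n : ℕ}

lemma extend (G : Matrix (Fin m) (Fin n) 𝔽) (k : ℕ)
    (hk : k = finrank 𝔽 (span 𝔽 (Set.range (fun j => fun t => G t j)))) (j : ℕ) :
    ∀ (T : Finset (Fin n)),
      finrank 𝔽 (span 𝔽 ((fun j => fun t => G t j) '' ↑T)) + j ≤ k →
      ∃ T', T ⊆ T' ∧ T'.card = T.card + j ∧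
        finrank 𝔽 (span 𝔽 ((fun j => fun t => G t j) '' ↑T')) =
          finrank 𝔽 (span 𝔽 ((fun j => fun t => G t j) '' ↑T)) + j := by
  induction j with
  | zero => intro T _; exact ⟨T, Finset.Subset.refl T, by simp, by simp⟩
  | succ j ih =>
    intro T h
    set cols : Fin n → (Fin m → 𝔽) := fun j => fun t => G t j with hcols
    have hex : ∃ i, cols i ∉ span 𝔽 (cols '' ↑T) := by
      by_contra hc
      push_neg at hc
      have hle : span 𝔽 (Set.range cols) ≤ span 𝔽 (cols '' ↑T) :=
        span_le.mpr (Set.range_subset_iff.mpr fun i => hc i)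
      have := Submodule.finrank_mono hle
      omega
    obtain ⟨i, hi⟩ := hex
    have hiT : i ∉ T := fun hiT => hi (subset_span (Set.mem_image_of_mem _ hiT))
    have hfr : finrank 𝔽 (span 𝔽 (cols '' ↑(insert i T))) =
        finrank 𝔽 (span 𝔽 (cols '' ↑T)) + 1 := by
      rw [Finset.coe_insert, Set.image_insert_eq]
      exact finrank_span_insert' hi
    obtain ⟨T', hsub, hcard, hfr'⟩ := ih (insert i T) (by rw [hfr]; omega)
    refine ⟨T', (Finset.subset_insert i T).trans hsub, ?_, ?_⟩
    · rw [hcard, Finset.card_insert_of_notMem hiT]; omega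
    · rw [hfr', hfr]; omega

lemma span_reduce (G : Matrix (Fin m) (Fin n) 𝔽) (x : ℕ) (l : Fin x → Fin n)
    (R : Fin x → Finset (Fin n)) (h : ntUnion G x l R) :
    span 𝔽 ((fun j => fun t => G t j) '' ↑(Finset.univ.biUnion R)) ≤
      span 𝔽 ((fun j => fun t => G t j) ''
        ↑(Finset.univ.biUnion R \ Finset.image l Finset.univ)) := by
  set cols : Fin n → (Fin m → 𝔽) := fun j => fun t => G t j with hcols
  set S : Finset (Fin n) := Finset.univ.biUnion R with hS
  set L : Finset (Fin n) := Finset.image l Finset.univ with hL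
  set W := span 𝔽 (cols '' ↑(S \ L)) with hW
  have hmemW : ∀ i, i ∈ S → i ∉ L → cols i ∈ W := by
    intro i hiS hiL
    exact subset_span ⟨i, Finset.mem_coe.mpr (Finset.mem_sdiff.mpr ⟨hiS, hiL⟩), rfl⟩
  have key : ∀ N, ∀ j : Fin x, j.val < N → cols (l j) ∈ W := by
    intro N
    induction N with
    | zero => intro j hj; omega
    | succ N ih =>
      intro j hj
      have hreg := (h.1 j).2
      have hle : span 𝔽 (cols '' ↑((R j).erase (l j))) ≤ W := by
        rw [span_le]
        rintro _ ⟨i, hi, rfl⟩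
        have hi' : i ∈ (R j).erase (l j) := Finset.mem_coe.mp hi
        have hiR : i ∈ R j := Finset.mem_of_mem_erase hi'
        have hine : i ≠ l j := Finset.ne_of_mem_erase hi'
        by_cases hiL : i ∈ L
        · obtain ⟨j', -, rfl⟩ := Finset.mem_image.mp hiL
          have hj' : j' < j := by
            rcases lt_trichotomy j' j with h1 | h1 | h1
            · exact h1
            · exact absurd (by rw [h1]) hine
            · exact absurd hiR (h.2 j' j h1)
          exact ih j' (by omega)
        · exact hmemW i (Finset.mem_biUnion.mpr ⟨j, Finset.mem_univ j, hiR⟩) hiL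
      exact hle hreg
  rw [span_le]
  rintro _ ⟨i, hiS, rfl⟩
  by_cases hiL : i ∈ L
  · obtain ⟨j, -, rfl⟩ := Finset.mem_image.mp hiL
    exact key (j.val + 1) j (Nat.lt_succ_self _)
  · exact hmemW i (Finset.mem_coe.mp hiS) hiL

end Aux2

lemma ntUnion_inj {𝔽 : Type*} [Field 𝔽] {m n : ℕ} {G : Matrix (Fin m) (Fin n) 𝔽}
    {x : ℕ} {l : Fin x → Fin n} {R : Fin x → Finset (Fin n)}
    (h : ntUnion G x l R) : Function.Injective l := by
  intro a b hab
  by_contra hne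
  rcases Ne.lt_or_gt hne with h1 | h1
  · exact h.2 b a h1 (hab ▸ (h.1 a).1)
  · exact h.2 a b h1 (hab ▸ (h.1 b).1)

/-- for an `[n,k,d]` linear code, `d ≤ n − k + 1 − ρ` where
`ρ = max{x : Φ(x) − x < k}`. -/
theorem singleton_like_bound {𝔽 : Type*} [Field 𝔽] {m n : ℕ}
    (G : Matrix (Fin m) (Fin n) 𝔽) (k d : ℕ)
    (hk : k = Module.finrank 𝔽 (rowCode G)) (hk1 : 1 ≤ k)
    (hd : d = minDist (rowCode G)) :
    (d : ℤ) ≤ (n : ℤ) - k + 1 - rho G k := by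
  have hk' : k = finrank 𝔽 (span 𝔽 (Set.range (fun j => fun t => G t j))) := by
    rw [hk]; exact rowcol G
  set P := {x : ℕ | (∃ (l : Fin x → Fin n) (R : Fin x → Finset (Fin n)),
    ntUnion G x l R) ∧ Phi G x - x < k} with hP
  have hPne : P.Nonempty := by
    refine ⟨0, ⟨Fin.elim0, Fin.elim0, fun j => j.elim0, fun j => j.elim0⟩, ?_⟩
    have h0 : Phi G 0 ≤ 0 := Nat.sInf_le
      ⟨Fin.elim0, Fin.elim0, ⟨fun j => j.elim0, fun j => j.elim0⟩, by simp⟩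
    omega
  have hPbdd : BddAbove P := by
    refine ⟨n, fun x hx => ?_⟩
    obtain ⟨⟨l, R, hnt⟩, -⟩ := hx
    calc x = Fintype.card (Fin x) := (Fintype.card_fin x).symm
    _ ≤ Fintype.card (Fin n) := Fintype.card_le_of_injective l (ntUnion_inj hnt)
    _ = n := Fintype.card_fin n
  have hρmem : rho G k ∈ P := Nat.sSup_mem hPne hPbdd
  set ρ := rho G k with hρdef
  obtain ⟨⟨l₀, R₀, hnt₀⟩, hΦρ⟩ := hρmem
  have hΦmem : Phi G ρ ∈ {c | ∃ (l : Fin ρ → Fin n) (R : Fin ρ → Finset (Fin n)),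
      ntUnion G ρ l R ∧ (Finset.univ.biUnion R).card = c} :=
    Nat.sInf_mem ⟨(Finset.univ.biUnion R₀).card, l₀, R₀, hnt₀, rfl⟩
  obtain ⟨l, R, hnt, hScard⟩ := hΦmem
  have hLS : Finset.image l Finset.univ ⊆ Finset.univ.biUnion R := by
    intro i hi
    obtain ⟨j, -, rfl⟩ := Finset.mem_image.mp hi
    exact Finset.mem_biUnion.mpr ⟨j, Finset.mem_univ j, (hnt.1 j).1⟩
  have hLcard : (Finset.image l Finset.univ).card = ρ := by
    rw [Finset.card_image_of_injective _ (ntUnion_inj hnt), Finset.card_univ,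
      Fintype.card_fin]
  have hρS : ρ ≤ (Finset.univ.biUnion R).card :=
    le_of_eq_of_le hLcard.symm (Finset.card_le_card hLS)
  have hgS : finrank 𝔽 (span 𝔽 ((fun j => fun t => G t j) '' ↑(Finset.univ.biUnion R))) + ρ ≤
      (Finset.univ.biUnion R).card := by
    have h1 := Submodule.finrank_mono (span_reduce G ρ l R hnt)
    have h2 : finrank 𝔽 (span 𝔽 ((fun j => fun t => G t j) ''
        ↑(Finset.univ.biUnion R \ Finset.image l Finset.univ))) ≤
        (Finset.univ.biUnion R \ Finset.image l Finset.univ).card := by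
      rw [← Finset.coe_image]
      exact le_trans (finrank_span_finset_le_card _) Finset.card_image_le
    have h3 := le_trans h1 h2
    rw [Finset.card_sdiff_of_subset hLS, hLcard] at h3
    omega
  have hgk : finrank 𝔽 (span 𝔽 ((fun j => fun t => G t j) ''
      ↑(Finset.univ.biUnion R))) < k := by omega
  obtain ⟨T, hST, hTcard, hTfr⟩ := extend G k hk'
    (k - 1 - finrank 𝔽 (span 𝔽 ((fun j => fun t => G t j) '' ↑(Finset.univ.biUnion R))))
    (Finset.univ.biUnion R) (by omega)
  have hTlt : finrank 𝔽 (span 𝔽 ((fun j => fun t => G t j) '' ↑T)) <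
      finrank 𝔽 (rowCode G) := by
    rw [← hk]; omega
  obtain ⟨c, hc, hc0, hcz⟩ := exists_codeword G T hTlt
  have hd_le : d ≤ wt c := hd ▸ Nat.sInf_le ⟨c, hc, hc0, rfl⟩
  have hwt : wt c + T.card ≤ n := by
    have hsub : (Finset.univ.filter fun j => c j ≠ 0) ⊆ Finset.univ \ T := by
      intro j hj
      rw [Finset.mem_filter] at hj
      rw [Finset.mem_sdiff]
      exact ⟨Finset.mem_univ j, fun hjT => hj.2 (hcz j hjT)⟩
    have hle := Finset.card_le_card hsub
    rw [Finset.card_sdiff_of_subset (Finset.subset_univ T), Finset.card_univ, Fintype.card_fin] at hle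
    have hwteq : wt c = (Finset.univ.filter fun j => c j ≠ 0).card := rfl
    have hTn : T.card ≤ n := le_trans (Finset.card_le_univ T) (le_of_eq (by simp))
    omega
  have hΦS : (Finset.univ.biUnion R).card < k + ρ := by
    rw [hScard]; omega
  have key : k - 1 + ρ ≤ T.card := by omega
  omega
end

section
/- Let C be an [n,k,d] linear code with two (r_i, δ_i)-localities (i = 1,2), with r_1 ≤ r_2, δ_1 ≥ δ_2 ≥ 2. Set Δ = ⌈n_1/(r_1+δ_1−1)⌉(δ_1−1). If r_1⌈n_1/(r_1+δ_1−1)⌉ ≤ k−1 and r_1⌈(Δ−1)/(δ_1−1)⌉ + (Δ−1) < n_1, then for all integers x with 0 ≤ x ≤ Δ: Φ(x) ≤ r_1⌈x/(δ_1−1)⌉ + x. -/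
open scoped Classical

section AuxPhi

variable {𝔽 : Type*} [Field 𝔽] {m n : ℕ}

private lemma aux_div_eq_of (a d q : ℕ) (hd : 0 < d) (h1 : q * d ≤ a)
    (h2 : a < (q + 1) * d) : a / d = q := by
  have hle : q ≤ a / d := (Nat.le_div_iff_mul_le hd).mpr h1
  have hlt : a / d < q + 1 := (Nat.div_lt_iff_lt_mul hd).mpr h2
  omega

private lemma aux_ntUnion_cast (G : Matrix (Fin m) (Fin n) 𝔽) {a b : ℕ} (h : a = b)
    (l : Fin a → Fin n) (R : Fin a → Finset (Fin n)) (hnt : ntUnion G a l R) :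
    ntUnion G b (fun j => l (Fin.cast h.symm j)) (fun j => R (Fin.cast h.symm j)) ∧
      Finset.univ.biUnion (fun j => R (Fin.cast h.symm j)) = Finset.univ.biUnion R := by
  subst h
  exact ⟨hnt, rfl⟩

private lemma aux_append_step (G : Matrix (Fin m) (Fin n) 𝔽)
    {y : ℕ} {l : Fin y → Fin n} {R : Fin y → Finset (Fin n)}
    (hnt : ntUnion G y l R)
    (S E F : Finset (Fin n)) {f : ℕ} (hFcard : F.card = f)
    (hFE : F ⊆ E)
    (hFU : ∀ i ∈ F, i ∉ Finset.univ.biUnion R)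
    (hreg : ∀ j ∈ E, regenSet G j ((S \ E) ∪ {j})) :
    ∃ (l' : Fin (y + f) → Fin n) (R' : Fin (y + f) → Finset (Fin n)),
      ntUnion G (y + f) l' R' ∧
      Finset.univ.biUnion R' ⊆ (Finset.univ.biUnion R) ∪ (S \ E) ∪ F := by
  classical
  set g : Fin f → Fin n := fun t => ((F.orderIsoOfFin hFcard) t : Fin n) with hg
  have hgF : ∀ t, g t ∈ F := fun t => ((F.orderIsoOfFin hFcard) t).2
  have hginj : Function.Injective g := fun a b hab =>
    (F.orderIsoOfFin hFcard).injective (Subtype.ext hab)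
  set Rn : Fin f → Finset (Fin n) := fun t => (S \ E) ∪ {g t} with hRn
  refine ⟨Fin.append l g, Fin.append R Rn, ⟨?_, ?_⟩, ?_⟩
  · intro j
    refine Fin.addCases (motive := fun jj =>
      regenSet G (Fin.append l g jj) (Fin.append R Rn jj)) ?_ ?_ j
    · intro i
      simp only [Fin.append_left]
      exact hnt.1 i
    · intro t
      simp only [Fin.append_right]
      exact hreg (g t) (hFE (hgF t))
  · intro j
    refine Fin.addCases (motive := fun jj =>
      ∀ j', j' < jj → Fin.append l g jj ∉ Fin.append R Rn j') ?_ ?_ j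
    · intro i j'
      refine Fin.addCases (motive := fun jj' =>
        jj' < Fin.castAdd f i → Fin.append l g (Fin.castAdd f i) ∉ Fin.append R Rn jj')
        ?_ ?_ j'
      · intro i' hlt
        simp only [Fin.append_left]
        have hv : (i' : ℕ) < (i : ℕ) := hlt
        exact hnt.2 i i' hv
      · intro t hlt
        exfalso
        have hi := i.isLt
        simp only [Fin.lt_def, Fin.coe_natAdd, Fin.coe_castAdd] at hlt
        omega
    · intro t j'
      refine Fin.addCases (motive := fun jj' =>
        jj' < Fin.natAdd y t → Fin.append l g (Fin.natAdd y t) ∉ Fin.append R Rn jj')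
        ?_ ?_ j'
      · intro i' _
        simp only [Fin.append_left, Fin.append_right]
        intro hmem
        exact hFU (g t) (hgF t) (Finset.mem_biUnion.mpr ⟨i', Finset.mem_univ _, hmem⟩)
      · intro t' hlt
        simp only [Fin.append_right, hRn]
        have htt : t' ≠ t := by
          simp only [Fin.lt_def, Fin.coe_natAdd] at hlt
          intro h; rw [h] at hlt; omega
        intro hmem
        rcases Finset.mem_union.mp hmem with h | h
        · exact (Finset.mem_sdiff.mp h).2 (hFE (hgF t))
        · have : g t = g t' := Finset.mem_singleton.mp h
          exact htt (hginj this.symm)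
  · intro i hi
    obtain ⟨j, _, hij⟩ := Finset.mem_biUnion.mp hi
    revert hij
    refine Fin.addCases (motive := fun jj =>
      i ∈ Fin.append R Rn jj →
        i ∈ (Finset.univ.biUnion R) ∪ (S \ E) ∪ F) ?_ ?_ j
    · intro i0
      simp only [Fin.append_left]
      intro h
      exact Finset.mem_union_left _ (Finset.mem_union_left _
        (Finset.mem_biUnion.mpr ⟨i0, Finset.mem_univ _, h⟩))
    · intro t
      simp only [Fin.append_right, hRn]
      intro h
      rcases Finset.mem_union.mp h with h | h
      · exact Finset.mem_union_left _ (Finset.mem_union_right _ h)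
      · have hig : i = g t := Finset.mem_singleton.mp h
        exact Finset.mem_union_right _ (hig ▸ hgF t)

private lemma aux_chunk_extend (G : Matrix (Fin m) (Fin n) 𝔽) (T₁ : Finset (Fin n))
    (r₁ δ₁ : ℕ) (hδ : 2 ≤ δ₁) (hloc : hasLocality G T₁ r₁ δ₁) :
    ∀ e : ℕ, 1 ≤ e → e ≤ δ₁ - 1 →
      ∀ (y : ℕ) (l : Fin y → Fin n) (R : Fin y → Finset (Fin n)),
      ntUnion G y l R → (Finset.univ.biUnion R).card + e ≤ T₁.card →
      ∃ (l' : Fin (y + e) → Fin n) (R' : Fin (y + e) → Finset (Fin n)),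
        ntUnion G (y + e) l' R' ∧
        (Finset.univ.biUnion R').card ≤ (Finset.univ.biUnion R).card + r₁ + e := by
  intro e
  induction e using Nat.strong_induction_on with
  | _ e ih =>
    intro he1 heδ y l R hnt hcard
    set U := Finset.univ.biUnion R with hU
    have hnsub : ¬ T₁ ⊆ U := fun h => absurd (Finset.card_le_card h) (by omega)
    obtain ⟨ι, hιT, hιU⟩ := Finset.not_subset.mp hnsub
    obtain ⟨S, hST, hιS, hδS, hSr, hreg⟩ := hloc ι hιT
    set N := S \ U with hN
    have hιN : ι ∈ N := Finset.mem_sdiff.mpr ⟨hιS, hιU⟩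
    have hN1 : 1 ≤ N.card := Finset.card_pos.mpr ⟨ι, hιN⟩
    have hNS : N ⊆ S := Finset.sdiff_subset
    have hd1 : δ₁ - 1 ≤ S.card := by omega
    by_cases hcase : e ≤ N.card
    · -- one-shot: take e fresh coordinates
      obtain ⟨F, hFN, hFcard⟩ := Finset.exists_subset_card_eq hcase
      have hFS : F ⊆ S := hFN.trans hNS
      obtain ⟨E, hFE, hES, hEcard⟩ :=
        Finset.exists_subsuperset_card_eq hFS (by omega : F.card ≤ δ₁ - 1) hd1
      obtain ⟨l', R', hnt', hsub⟩ := aux_append_step G hnt S E F hFcard hFE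
        (fun i hi => (Finset.mem_sdiff.mp (hFN hi)).2) (hreg E hES hEcard)
      refine ⟨l', R', hnt', ?_⟩
      have hSE : (S \ E).card ≤ r₁ := by
        have := Finset.card_sdiff_of_subset hES
        omega
      calc (Finset.univ.biUnion R').card
          ≤ (U ∪ (S \ E) ∪ F).card := Finset.card_le_card hsub
        _ ≤ U.card + (S \ E).card + F.card := by
            refine le_trans (Finset.card_union_le _ _) ?_
            exact Nat.add_le_add_right (Finset.card_union_le U (S \ E)) _
        _ ≤ U.card + r₁ + e := by omega
    · -- partial: use all of N, then recurse
      push_neg at hcase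
      obtain ⟨E, hNE, hES, hEcard⟩ :=
        Finset.exists_subsuperset_card_eq hNS (by omega : N.card ≤ δ₁ - 1) hd1
      obtain ⟨l', R', hnt', hsub⟩ := aux_append_step G hnt S E N rfl hNE
        (fun i hi => (Finset.mem_sdiff.mp hi).2) (hreg E hES hEcard)
      have hSEU : S \ E ⊆ U := by
        intro i hi
        rcases Finset.mem_sdiff.mp hi with ⟨hiS, hiE⟩
        by_contra hiU
        exact hiE (hNE (Finset.mem_sdiff.mpr ⟨hiS, hiU⟩))
      have hsub' : Finset.univ.biUnion R' ⊆ U ∪ N := by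
        intro i hi
        rcases Finset.mem_union.mp (hsub hi) with h | h
        · rcases Finset.mem_union.mp h with h | h
          · exact Finset.mem_union_left _ h
          · exact Finset.mem_union_left _ (hSEU h)
        · exact Finset.mem_union_right _ h
      have hcard' : (Finset.univ.biUnion R').card ≤ U.card + N.card := by
        refine le_trans (Finset.card_le_card hsub') ?_
        refine le_trans (Finset.card_union_le _ _) (le_refl _)
      obtain ⟨l2, R2, hnt2, hc2⟩ := ih (e - N.card) (by omega) (by omega) (by omega)
        (y + N.card) l' R' hnt' (by omega)
      have hlen : (y + N.card) + (e - N.card) = y + e := by omega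
      obtain ⟨hnt3, hbe⟩ := aux_ntUnion_cast G hlen l2 R2 hnt2
      refine ⟨_, _, hnt3, ?_⟩
      rw [hbe]
      omega

end AuxPhi

/-- Lemma 3.1, first part: bound on `Φ(x)` for `0 ≤ x ≤ Δ`. -/
theorem phi_bound_two_localities_first {𝔽 : Type*} [Field 𝔽] {m n : ℕ}
    (G : Matrix (Fin m) (Fin n) 𝔽) (k : ℕ)
    (hk : k = Module.finrank 𝔽 (rowCode G))
    (T₁ T₂ : Finset (Fin n)) (n₁ n₂ r₁ r₂ δ₁ δ₂ : ℕ)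
    (hdisj : Disjoint T₁ T₂) (hcover : T₁ ∪ T₂ = Finset.univ)
    (hn₁ : T₁.card = n₁) (hn₂ : T₂.card = n₂)
    (hr : r₁ ≤ r₂) (hδ : δ₂ ≤ δ₁) (hδ₂ : 2 ≤ δ₂)
    (hloc₁ : hasLocality G T₁ r₁ δ₁) (hloc₂ : hasLocality G T₂ r₂ δ₂)
    (Δ : ℕ) (hΔ : Δ = cdiv n₁ (r₁ + δ₁ - 1) * (δ₁ - 1))
    (h1 : r₁ * cdiv n₁ (r₁ + δ₁ - 1) ≤ k - 1)
    (h2 : r₁ * cdiv (Δ - 1) (δ₁ - 1) + (Δ - 1) < n₁) :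
    ∀ x ≤ Δ, Phi G x ≤ r₁ * cdiv x (δ₁ - 1) + x := by
  subst hn₁
  have hδ₁ : 2 ≤ δ₁ := le_trans hδ₂ hδ
  have hd0 : 0 < δ₁ - 1 := by omega
  have key : ∀ x, x ≤ Δ → ∃ (l : Fin x → Fin n) (R : Fin x → Finset (Fin n)),
      ntUnion G x l R ∧
      (Finset.univ.biUnion R).card ≤ r₁ * cdiv x (δ₁ - 1) + x := by
    intro x
    induction x using Nat.strong_induction_on with
    | _ x ihx =>
      intro hx
      rcases Nat.eq_zero_or_pos x with rfl | hx0
      · refine ⟨Fin.elim0, Fin.elim0, ⟨fun j => j.elim0, fun j => j.elim0⟩, ?_⟩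
        simp
      · set d := δ₁ - 1 with hdd
        set q := (x - 1) / d with hq
        have hdm := Nat.div_add_mod (x - 1) d
        rw [← hq] at hdm
        have hmlt : (x - 1) % d < d := Nat.mod_lt _ hd0
        have hy1 : d * q ≤ x - 1 := by omega
        have hy2 : x - 1 < d * q + d := by omega
        set y := d * q with hy
        have hylt : y < x := by omega
        have he1 : 1 ≤ x - y := by omega
        have he2 : x - y ≤ d := by omega
        have hqdy : q * d = y := by rw [hy, Nat.mul_comm]
        have hq1 : (q + 1) * d = y + d := by rw [hy]; ring
        have hq2 : (q + 1 + 1) * d = y + d + d := by rw [hy]; ring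
        have hcy : cdiv y d = q := by
          refine aux_div_eq_of _ _ _ hd0 (by omega) (by omega)
        have hcx : cdiv x d = q + 1 := by
          refine aux_div_eq_of _ _ _ hd0 (by omega) (by omega)
        obtain ⟨l, R, hnt, hcR⟩ := ihx y hylt (by omega)
        rw [hcy] at hcR
        -- bound needed for the chunk extension
        have hqle : q ≤ cdiv (Δ - 1) d := by
          have h1' : (x - 1) / d ≤ (Δ - 1) / d :=
            Nat.div_le_div_right (by omega)
          have h2' : (Δ - 1) / d ≤ (Δ - 1 + d - 1) / d :=
            Nat.div_le_div_right (by omega)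
          exact le_trans h1' h2'
        have hmul : r₁ * q ≤ r₁ * cdiv (Δ - 1) d := Nat.mul_le_mul_left _ hqle
        have hprec : (Finset.univ.biUnion R).card + (x - y) ≤ T₁.card := by omega
        obtain ⟨l', R', hnt', hc'⟩ := aux_chunk_extend G T₁ r₁ δ₁ hδ₁ hloc₁
          (x - y) he1 he2 y l R hnt hprec
        have hlen : y + (x - y) = x := by omega
        obtain ⟨hnt3, hbe⟩ := aux_ntUnion_cast G hlen l' R' hnt'
        refine ⟨_, _, hnt3, ?_⟩
        rw [hbe, hcx]
        have : r₁ * (q + 1) = r₁ * q + r₁ := by ring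
        omega
  intro x hx
  obtain ⟨l, R, hnt, hcard⟩ := key x hx
  have hmem : (Finset.univ.biUnion R).card ∈
      {c | ∃ (l : Fin x → Fin n) (R : Fin x → Finset (Fin n)),
        ntUnion G x l R ∧ (Finset.univ.biUnion R).card = c} := ⟨l, R, hnt, rfl⟩
  exact le_trans (Nat.sInf_le hmem) hcard
end

section
/- Let C be an [n,k,d] linear code with two (r_i, δ_i)-localities (i = 1,2), r_1 ≤ r_2, δ_1 ≥ δ_2 ≥ 2, and Δ = ⌈n_1/(r_1+δ_1−1)⌉(δ_1−1). If r_1⌈n_1/(r_1+δ_1−1)⌉ ≤ k−1 and r_1⌈(Δ−1)/(δ_1−1)⌉ + (Δ−1) < n_1, then for all x with Δ ≤ x ≤ ρ+1: Φ(x) ≤ r_1⌈n_1/(r_1+δ_1−1)⌉ + r_2⌈(x−Δ)/(δ_2−1)⌉ + x, where ρ = max{x : Φ(x) − x < k}. -/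
open scoped Classical

section Helpers

open Finset

variable {𝔽 : Type*} [Field 𝔽] {m n : ℕ}

/-- The span of a set of columns of `G`. -/
noncomputable def colSpan (G : Matrix (Fin m) (Fin n) 𝔽) (U : Finset (Fin n)) :
    Submodule 𝔽 (Fin m → 𝔽) :=
  Submodule.span 𝔽 ((fun j => fun t => G t j) '' ↑U)

lemma colSpan_mono (G : Matrix (Fin m) (Fin n) 𝔽) {U V : Finset (Fin n)} (h : U ⊆ V) :
    colSpan G U ≤ colSpan G V :=
  Submodule.span_mono (Set.image_mono (by exact_mod_cast h))

lemma finrank_colSpan_le_card (G : Matrix (Fin m) (Fin n) 𝔽) (U : Finset (Fin n)) :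
    Module.finrank 𝔽 (colSpan G U) ≤ U.card := by
  have h1 : ((fun j => fun t => G t j) '' ↑U) = ↑(U.image (fun j => fun t => G t j)) := by
    simp [Finset.coe_image]
  rw [colSpan, h1]
  exact (finrank_span_finset_le_card _).trans (Finset.card_image_le)

lemma finrank_colSpan_union_le (G : Matrix (Fin m) (Fin n) 𝔽) (U D : Finset (Fin n)) :
    Module.finrank 𝔽 (colSpan G (U ∪ D)) ≤ Module.finrank 𝔽 (colSpan G U) + D.card := by
  have hsp : colSpan G (U ∪ D) = colSpan G U ⊔ colSpan G D := by
    rw [colSpan, colSpan, colSpan, ← Submodule.span_union, ← Set.image_union,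
      Finset.coe_union]
  rw [hsp]
  refine le_trans ?_ (Nat.add_le_add_left (finrank_colSpan_le_card G D) _)
  exact Submodule.finrank_add_le_finrank_add_finrank _ _

end Helpers
section Helpers2

open Finset Matrix

variable {𝔽 : Type*} [Field 𝔽] {m n : ℕ}

lemma finrank_colSpan_univ (G : Matrix (Fin m) (Fin n) 𝔽) :
    Module.finrank 𝔽 (colSpan G Finset.univ) = Module.finrank 𝔽 (rowCode G) := by
  have h1 : colSpan G Finset.univ = Submodule.span 𝔽 (Set.range Gᵀ) := by
    rw [colSpan, Finset.coe_univ, Set.image_univ]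
    congr 1
  have h2 : rowCode G = Submodule.span 𝔽 (Set.range G) := rfl
  rw [h1, h2]
  exact (Matrix.rank_eq_finrank_span_cols G).symm.trans (Matrix.rank_eq_finrank_span_row G)

/-- restriction of a nontrivial union -/
lemma ntUnion_restrict (G : Matrix (Fin m) (Fin n) 𝔽) {x : ℕ} {l : Fin (x+1) → Fin n}
    {R : Fin (x+1) → Finset (Fin n)} (h : ntUnion G (x+1) l R) :
    ntUnion G x (fun j => l j.castSucc) (fun j => R j.castSucc) ∧
      Finset.univ.biUnion (fun j : Fin x => R j.castSucc) ⊆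
        (Finset.univ.biUnion R).erase (l (Fin.last x)) := by
  constructor
  · exact ⟨fun j => h.1 _, fun j j' hlt => h.2 _ _ (by simpa using hlt)⟩
  · intro u hu
    rw [Finset.mem_biUnion] at hu
    obtain ⟨j, -, hj⟩ := hu
    rw [Finset.mem_erase]
    refine ⟨?_, Finset.mem_biUnion.2 ⟨j.castSucc, Finset.mem_univ _, hj⟩⟩
    rintro rfl
    exact h.2 (Fin.last x) j.castSucc (Fin.castSucc_lt_last j) hj

lemma l_mem_biUnion (G : Matrix (Fin m) (Fin n) 𝔽) {x : ℕ} {l : Fin x → Fin n}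
    {R : Fin x → Finset (Fin n)} (h : ntUnion G x l R) (j : Fin x) :
    l j ∈ Finset.univ.biUnion R :=
  Finset.mem_biUnion.2 ⟨j, Finset.mem_univ _, (h.1 j).1⟩

/-- the key rank bound for nontrivial unions -/
lemma rank_bound (G : Matrix (Fin m) (Fin n) 𝔽) :
    ∀ (x : ℕ) (l : Fin x → Fin n) (R : Fin x → Finset (Fin n)), ntUnion G x l R →
      Module.finrank 𝔽 (colSpan G (Finset.univ.biUnion R)) + x ≤ (Finset.univ.biUnion R).card := by
  intro x
  induction x with
  | zero =>
    intro l R _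
    have h0 := finrank_colSpan_le_card G (Finset.univ.biUnion R)
    omega
  | succ x ih =>
    intro l R h
    set U := Finset.univ.biUnion R with hU
    set lx := l (Fin.last x) with hlx
    obtain ⟨h', hsub⟩ := ntUnion_restrict G h
    set U' := Finset.univ.biUnion (fun j : Fin x => R j.castSucc) with hU'
    have hlxU : lx ∈ U := l_mem_biUnion G h _
    have hcolmem : (fun t => G t lx) ∈ colSpan G (U.erase lx) := by
      have hRsub : (R (Fin.last x)).erase lx ⊆ U.erase lx := by
        intro u hu
        rw [Finset.mem_erase] at hu ⊢
        exact ⟨hu.1, Finset.mem_biUnion.2 ⟨_, Finset.mem_univ _, hu.2⟩⟩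
      exact colSpan_mono G hRsub (h.1 (Fin.last x)).2
    have hspan : colSpan G U ≤ colSpan G (U.erase lx) := by
      refine Submodule.span_le.2 ?_
      rintro v ⟨j, hj, rfl⟩
      by_cases hje : j = lx
      · subst hje; exact hcolmem
      · refine Submodule.subset_span ⟨j, ?_, rfl⟩
        simp only [Finset.coe_erase, Set.mem_diff, Set.mem_singleton_iff]
        exact ⟨hj, hje⟩
    have hUsplit : U' ∪ ((U.erase lx) \ U') = U.erase lx :=
      Finset.union_sdiff_of_subset hsub
    have h3 : Module.finrank 𝔽 (colSpan G (U.erase lx)) ≤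
        Module.finrank 𝔽 (colSpan G U') + ((U.erase lx) \ U').card := by
      conv_lhs => rw [← hUsplit]
      exact finrank_colSpan_union_le G _ _
    have h4 : Module.finrank 𝔽 (colSpan G U') + x ≤ U'.card := ih _ _ h'
    have hcard1 : ((U.erase lx) \ U').card = (U.erase lx).card - U'.card :=
      Finset.card_sdiff_of_subset hsub
    have hcard2 : (U.erase lx).card = U.card - 1 := Finset.card_erase_of_mem hlxU
    have hle : U'.card ≤ (U.erase lx).card := Finset.card_le_card hsub
    have hU1 : 1 ≤ U.card := Finset.card_pos.2 ⟨lx, hlxU⟩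
    have h5 : Module.finrank 𝔽 (colSpan G U) ≤ Module.finrank 𝔽 (colSpan G (U.erase lx)) :=
      Submodule.finrank_mono hspan
    omega

end Helpers2
section Helpers3

open Finset

variable {𝔽 : Type*} [Field 𝔽] {m n : ℕ}

/-- extend a nontrivial union by fresh coordinates from `L`, supported on `A`. -/
lemma ext_step (G : Matrix (Fin m) (Fin n) 𝔽) {x t : ℕ} {l : Fin x → Fin n}
    {R : Fin x → Finset (Fin n)} (h : ntUnion G x l R) (L A : Finset (Fin n))
    (hLt : L.card = t)
    (hfresh : ∀ j ∈ L, j ∉ Finset.univ.biUnion R)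
    (hdisj : ∀ j ∈ L, j ∉ A)
    (hregen : ∀ j ∈ L, regenSet G j (A ∪ {j})) :
    ∃ (l' : Fin (x + t) → Fin n) (R' : Fin (x + t) → Finset (Fin n)),
      ntUnion G (x + t) l' R' ∧
      Finset.univ.biUnion R' ⊆ (Finset.univ.biUnion R ∪ A) ∪ L := by
  have e := L.orderIsoOfFin hLt
  set U := Finset.univ.biUnion R with hU
  refine ⟨fun j => if hj : (j : ℕ) < x then l ⟨j, hj⟩ else
      (e ⟨(j : ℕ) - x, by omega⟩ : Fin n),
    fun j => if hj : (j : ℕ) < x then R ⟨j, hj⟩ else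
      A ∪ {(e ⟨(j : ℕ) - x, by omega⟩ : Fin n)}, ⟨?_, ?_⟩, ?_⟩
  · intro j
    by_cases hj : (j : ℕ) < x
    · simpa [hj] using h.1 ⟨j, hj⟩
    · simpa [hj] using hregen _ (e ⟨(j : ℕ) - x, by omega⟩).2
  · intro j j' hlt
    have hlt' : (j' : ℕ) < (j : ℕ) := hlt
    by_cases hj : (j : ℕ) < x
    · have hj' : (j' : ℕ) < x := by omega
      simp only [dif_pos hj, dif_pos hj']
      exact h.2 ⟨j, hj⟩ ⟨j', hj'⟩ hlt'
    · by_cases hj' : (j' : ℕ) < x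
      · simp only [dif_neg hj, dif_pos hj']
        intro hmem
        exact hfresh _ (e ⟨(j : ℕ) - x, by omega⟩).2
          (Finset.mem_biUnion.2 ⟨⟨j', hj'⟩, Finset.mem_univ _, hmem⟩)
      · simp only [dif_neg hj, dif_neg hj', Finset.mem_union, Finset.mem_singleton]
        push_neg
        constructor
        · exact hdisj _ (e ⟨(j : ℕ) - x, by omega⟩).2
        · intro heq
          have := Subtype.coe_injective heq
          have := e.injective this
          have : (j : ℕ) - x = (j' : ℕ) - x := congrArg Fin.val this
          omega
  · intro u hu
    rw [Finset.mem_biUnion] at hu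
    obtain ⟨j, -, hj⟩ := hu
    by_cases hjx : (j : ℕ) < x
    · rw [dif_pos hjx] at hj
      exact Finset.mem_union_left _ (Finset.mem_union_left _
        (Finset.mem_biUnion.2 ⟨_, Finset.mem_univ _, hj⟩))
    · rw [dif_neg hjx] at hj
      rcases Finset.mem_union.1 hj with hA | hL
      · exact Finset.mem_union_left _ (Finset.mem_union_right _ hA)
      · rw [Finset.mem_singleton] at hL
        subst hL
        exact Finset.mem_union_right _ (e ⟨(j : ℕ) - x, by omega⟩).2

lemma Phi_le (G : Matrix (Fin m) (Fin n) 𝔽) {x : ℕ} {l : Fin x → Fin n}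
    {R : Fin x → Finset (Fin n)} (h : ntUnion G x l R) :
    Phi G x ≤ (Finset.univ.biUnion R).card :=
  Nat.sInf_le ⟨l, R, h, rfl⟩

lemma Phi_attained (G : Matrix (Fin m) (Fin n) 𝔽) {x : ℕ}
    (h : ∃ (l : Fin x → Fin n) (R : Fin x → Finset (Fin n)), ntUnion G x l R) :
    ∃ (l : Fin x → Fin n) (R : Fin x → Finset (Fin n)), ntUnion G x l R ∧
      (Finset.univ.biUnion R).card = Phi G x := by
  obtain ⟨l, R, hnt⟩ := h
  have hne : {c | ∃ (l : Fin x → Fin n) (R : Fin x → Finset (Fin n)),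
      ntUnion G x l R ∧ (Finset.univ.biUnion R).card = c}.Nonempty := ⟨_, l, R, hnt, rfl⟩
  obtain ⟨l', R', h', hc⟩ := Nat.sInf_mem hne
  exact ⟨l', R', h', hc⟩

/-- dropping the last regenerating set decreases `Φ` by at least one. -/
lemma Phi_mono_step (G : Matrix (Fin m) (Fin n) 𝔽) {z : ℕ}
    (h : ∃ (l : Fin (z+1) → Fin n) (R : Fin (z+1) → Finset (Fin n)), ntUnion G (z+1) l R) :
    (∃ (l : Fin z → Fin n) (R : Fin z → Finset (Fin n)), ntUnion G z l R) ∧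
      Phi G z + 1 ≤ Phi G (z+1) := by
  obtain ⟨l, R, hnt, hc⟩ := Phi_attained G h
  obtain ⟨h', hsub⟩ := ntUnion_restrict G hnt
  have hlmem : l (Fin.last z) ∈ Finset.univ.biUnion R := l_mem_biUnion G hnt _
  have h1 : Phi G z ≤ (Finset.univ.biUnion (fun j : Fin z => R j.castSucc)).card :=
    Phi_le G h'
  have h2 : (Finset.univ.biUnion (fun j : Fin z => R j.castSucc)).card ≤
      ((Finset.univ.biUnion R).erase (l (Fin.last z))).card := Finset.card_le_card hsub
  have h3 : ((Finset.univ.biUnion R).erase (l (Fin.last z))).card =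
      (Finset.univ.biUnion R).card - 1 := Finset.card_erase_of_mem hlmem
  have h4 : 1 ≤ (Finset.univ.biUnion R).card := Finset.card_pos.2 ⟨_, hlmem⟩
  refine ⟨⟨_, _, h'⟩, by omega⟩

lemma Phi_chain (G : Matrix (Fin m) (Fin n) 𝔽) (d : ℕ) : ∀ (z : ℕ),
    (∃ (l : Fin (z+d) → Fin n) (R : Fin (z+d) → Finset (Fin n)), ntUnion G (z+d) l R) →
    (∃ (l : Fin z → Fin n) (R : Fin z → Finset (Fin n)), ntUnion G z l R) ∧
      Phi G z + d ≤ Phi G (z+d) := by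
  induction d with
  | zero => intro z h; exact ⟨h, le_rfl⟩
  | succ d ih =>
    intro z h
    have h1 := Phi_mono_step G (z := z + d) (by exact h)
    have h2 := ih z h1.1
    exact ⟨h2.1, by rw [show z+(d+1) = z+d+1 from rfl]; omega⟩

end Helpers3
section Helpers4

open Finset

variable {𝔽 : Type*} [Field 𝔽] {m n : ℕ}

/-- From a locality structure and a fresh coordinate, produce a step package. -/
lemma make_step (G : Matrix (Fin m) (Fin n) 𝔽) {T : Finset (Fin n)} {r δ : ℕ}
    (hloc : hasLocality G T r δ) (hδ : 2 ≤ δ) {ι : Fin n} {U : Finset (Fin n)}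
    (hιT : ι ∈ T) (hιU : ι ∉ U) :
    ∃ L A : Finset (Fin n), L ⊆ T ∧ A ⊆ T ∧ (∀ j ∈ L, j ∉ U) ∧ (∀ j ∈ L, j ∉ A) ∧
      L.Nonempty ∧ (∀ j ∈ L, regenSet G j (A ∪ {j})) ∧
      (A ⊆ U ∨ (L.card = δ - 1 ∧ (A \ U).card ≤ r)) := by
  obtain ⟨S, hST, hιS, hδS, hSr, hE⟩ := hloc ι hιT
  set F := S \ U with hF
  have hιF : ι ∈ F := Finset.mem_sdiff.2 ⟨hιS, hιU⟩
  have hFS : F ⊆ S := Finset.sdiff_subset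
  by_cases hb : δ - 1 ≤ F.card
  · -- big case
    obtain ⟨E, hEF, hEcard⟩ := Finset.exists_subset_card_eq hb
    refine ⟨E, S \ E, (hEF.trans hFS).trans hST, Finset.sdiff_subset.trans hST, ?_, ?_, ?_, ?_, ?_⟩
    · intro j hj; exact (Finset.mem_sdiff.1 (show j ∈ S \ U from hEF hj)).2
    · intro j hj hjA; exact (Finset.mem_sdiff.1 hjA).2 hj
    · exact Finset.card_pos.1 (by omega)
    · intro j hj; exact hE E (hEF.trans hFS) hEcard j hj
    · refine Or.inr ⟨hEcard, ?_⟩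
      have h1 : (S \ E) \ U = F \ E := by
        ext u; simp only [Finset.mem_sdiff, hF]; tauto
      have h2 : (F \ E).card = F.card - E.card := Finset.card_sdiff_of_subset hEF
      have h3 : F.card ≤ S.card := Finset.card_le_card hFS
      rw [h1, h2]
      omega
  · -- small case
    obtain ⟨E, hFE, hES, hEcard⟩ := Finset.exists_subsuperset_card_eq hFS (by omega)
      (by omega : δ - 1 ≤ S.card)
    refine ⟨F, S \ E, hFS.trans hST, Finset.sdiff_subset.trans hST, ?_, ?_, ⟨ι, hιF⟩, ?_, ?_⟩
    · intro j hj; exact (Finset.mem_sdiff.1 hj).2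
    · intro j hj hjA; exact (Finset.mem_sdiff.1 hjA).2 (hFE hj)
    · intro j hj; exact hE E hES hEcard j (hFE hj)
    · refine Or.inl ?_
      intro u hu
      have hu' := Finset.mem_sdiff.1 hu
      by_contra huU
      exact hu'.2 (hFE (Finset.mem_sdiff.2 ⟨hu'.1, huU⟩))

lemma cast_witness (G : Matrix (Fin m) (Fin n) 𝔽) {a b : ℕ} (hab : a = b)
    {l : Fin a → Fin n} {R : Fin a → Finset (Fin n)} (h : ntUnion G a l R) :
    ∃ (l' : Fin b → Fin n) (R' : Fin b → Finset (Fin n)), ntUnion G b l' R' ∧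
      Finset.univ.biUnion R' = Finset.univ.biUnion R := by
  subst hab; exact ⟨l, R, h, rfl⟩

/-- The block extension lemma: starting from a witness with `y` sets, extend to `goal` sets
within a block (at most one "big" step), keeping the union inside `T`. -/
lemma block (G : Matrix (Fin m) (Fin n) 𝔽) (T : Finset (Fin n)) (C q rmax goal : ℕ)
    (oracle : ∀ (y : ℕ) (l : Fin y → Fin n) (R : Fin y → Finset (Fin n)),
      ntUnion G y l R → Finset.univ.biUnion R ⊆ T → (Finset.univ.biUnion R).card ≤ C + y →
      y < goal →
      ∃ L A : Finset (Fin n), L ⊆ T ∧ A ⊆ T ∧ (∀ j ∈ L, j ∉ Finset.univ.biUnion R) ∧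
        (∀ j ∈ L, j ∉ A) ∧ L.Nonempty ∧ (∀ j ∈ L, regenSet G j (A ∪ {j})) ∧
        (A ⊆ Finset.univ.biUnion R ∨
          (q ≤ L.card ∧ (A \ Finset.univ.biUnion R).card ≤ rmax))) :
    ∀ (fuel y : ℕ) (l : Fin y → Fin n) (R : Fin y → Finset (Fin n)),
      goal - y ≤ fuel → ntUnion G y l R → Finset.univ.biUnion R ⊆ T →
      (Finset.univ.biUnion R).card ≤ C + y → y ≤ goal → goal ≤ y + q →
      ∃ (l' : Fin goal → Fin n) (R' : Fin goal → Finset (Fin n)),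
        ntUnion G goal l' R' ∧ Finset.univ.biUnion R' ⊆ T ∧
        (Finset.univ.biUnion R').card ≤ C + goal + rmax := by
  intro fuel
  induction fuel with
  | zero =>
    intro y l R hfuel hnt hsubT hcard hyg hgq
    have hy : y = goal := by omega
    subst hy
    exact ⟨l, R, hnt, hsubT, by omega⟩
  | succ fuel ih =>
    intro y l R hfuel hnt hsubT hcard hyg hgq
    by_cases hy : y = goal
    · subst hy
      exact ⟨l, R, hnt, hsubT, by omega⟩
    · have hylt : y < goal := by omega
      obtain ⟨L, A, hLT, hAT, hLfresh, hLA, hLne, hLregen, hcase⟩ :=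
        oracle y l R hnt hsubT hcard hylt
      set U := Finset.univ.biUnion R with hUdef
      rcases hcase with hsmall | hbig
      · -- small step : A ⊆ U, take t = min L.card (goal - y) fresh elements
        set t := min L.card (goal - y) with ht
        obtain ⟨L', hL'L, hL'card⟩ := Finset.exists_subset_card_eq
          (min_le_left L.card (goal - y))
        obtain ⟨l', R', hnt', hsub'⟩ := ext_step G hnt L' A hL'card
          (fun j hj => hLfresh j (hL'L hj)) (fun j hj => hLA j (hL'L hj))
          (fun j hj => hLregen j (hL'L hj))
        have hsubT' : Finset.univ.biUnion R' ⊆ T := by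
          refine hsub'.trans ?_
          intro u hu
          rcases Finset.mem_union.1 hu with hu | hu
          · rcases Finset.mem_union.1 hu with hu | hu
            · exact hsubT hu
            · exact hAT hu
          · exact hLT (hL'L hu)
        have hcard' : (Finset.univ.biUnion R').card ≤ C + (y + t) := by
          have h1 : (Finset.univ.biUnion R').card ≤ ((U ∪ A) ∪ L').card :=
            Finset.card_le_card hsub'
          have h2 : U ∪ A = U := Finset.union_eq_left.2 hsmall
          have h3 : ((U ∪ A) ∪ L').card ≤ U.card + L'.card := by
            rw [h2]; exact Finset.card_union_le _ _
          omega
        have htpos : 1 ≤ t := by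
          have := Finset.card_pos.2 hLne
          omega
        exact ih (y + t) l' R' (by omega) hnt' hsubT' hcard' (by omega) (by omega)
      · -- big step : finish the block
        have hneed : goal - y ≤ L.card := by omega
        obtain ⟨L', hL'L, hL'card⟩ := Finset.exists_subset_card_eq hneed
        obtain ⟨l', R', hnt', hsub'⟩ := ext_step G hnt L' A hL'card
          (fun j hj => hLfresh j (hL'L hj)) (fun j hj => hLA j (hL'L hj))
          (fun j hj => hLregen j (hL'L hj))
        have hy' : y + (goal - y) = goal := by omega
        obtain ⟨l'', R'', hnt'', hUeq⟩ := cast_witness G hy' hnt'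
        rw [← hUeq] at hsub'
        refine ⟨l'', R'', hnt'', ?_, ?_⟩
        · refine hsub'.trans ?_
          intro u hu
          rcases Finset.mem_union.1 hu with hu | hu
          · rcases Finset.mem_union.1 hu with hu | hu
            · exact hsubT hu
            · exact hAT hu
          · exact hLT (hL'L hu)
        · have h1 : (Finset.univ.biUnion R'').card ≤ ((U ∪ A) ∪ L').card :=
            Finset.card_le_card hsub'
          have h2 : (U ∪ A).card ≤ U.card + (A \ U).card := by
            rw [← Finset.union_sdiff_self_eq_union]
            exact Finset.card_union_le _ _
          have h3 : ((U ∪ A) ∪ L').card ≤ (U ∪ A).card + L'.card :=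
            Finset.card_union_le _ _
          omega

end Helpers4
section Helpers5

open Finset

variable {𝔽 : Type*} [Field 𝔽] {m n : ℕ}

lemma le_cdiv_mul (y q : ℕ) (hq : 0 < q) : y ≤ cdiv y q * q := by
  rcases Nat.eq_zero_or_pos y with rfl | hy
  · exact Nat.zero_le _
  · have h1 : cdiv y q = (y-1)/q + 1 := by
      rw [cdiv, show y + q - 1 = (y-1) + q by omega, Nat.add_div_right _ hq]
    have h2 : y - 1 < (y-1)/q * q + q := Nat.lt_div_mul_add hq
    rw [h1, Nat.add_mul, Nat.one_mul]
    omega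

lemma witness_le_n (G : Matrix (Fin m) (Fin n) 𝔽) {x : ℕ} {l : Fin x → Fin n}
    {R : Fin x → Finset (Fin n)} (h : ntUnion G x l R) : x ≤ n := by
  have hinj : Function.Injective l := by
    intro j j' hjj
    by_contra hne
    rcases Ne.lt_or_gt hne with hlt | hlt
    · exact h.2 j' j hlt (hjj ▸ (h.1 j).1)
    · exact h.2 j j' hlt (hjj ▸ (h.1 j').1)
  simpa using Fintype.card_le_of_injective l hinj

end Helpers5

/-- Lemma 3.1, second part: bound on `Φ(x)` for `Δ ≤ x ≤ ρ + 1`. -/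
theorem phi_bound_two_localities_second {𝔽 : Type*} [Field 𝔽] {m n : ℕ}
    (G : Matrix (Fin m) (Fin n) 𝔽) (k : ℕ)
    (hk : k = Module.finrank 𝔽 (rowCode G))
    (T₁ T₂ : Finset (Fin n)) (n₁ n₂ r₁ r₂ δ₁ δ₂ : ℕ)
    (hdisj : Disjoint T₁ T₂) (hcover : T₁ ∪ T₂ = Finset.univ)
    (hn₁ : T₁.card = n₁) (hn₂ : T₂.card = n₂)
    (hr : r₁ ≤ r₂) (hδ : δ₂ ≤ δ₁) (hδ₂ : 2 ≤ δ₂)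
    (hloc₁ : hasLocality G T₁ r₁ δ₁) (hloc₂ : hasLocality G T₂ r₂ δ₂)
    (Δ : ℕ) (hΔ : Δ = cdiv n₁ (r₁ + δ₁ - 1) * (δ₁ - 1))
    (h1 : r₁ * cdiv n₁ (r₁ + δ₁ - 1) ≤ k - 1)
    (h2 : r₁ * cdiv (Δ - 1) (δ₁ - 1) + (Δ - 1) < n₁) :
    ∀ x, Δ ≤ x → x ≤ rho G k + 1 →
      Phi G x ≤ r₁ * cdiv n₁ (r₁ + δ₁ - 1) + r₂ * cdiv (x - Δ) (δ₂ - 1) + x := by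
  intro x hxΔ hxρ
  have hδ₁2 : 2 ≤ δ₁ := le_trans hδ₂ hδ
  set s := r₁ + δ₁ - 1 with hs
  set a := cdiv n₁ s with ha
  set q₁ := δ₁ - 1 with hq₁def
  set q₂ := δ₂ - 1 with hq₂def
  have hq₁pos : 0 < q₁ := by omega
  have hq₂pos : 0 < q₂ := by omega
  have hn₁pos : 1 ≤ n₁ := by omega
  have hapos : 1 ≤ a := by
    rw [ha]
    unfold cdiv
    rw [Nat.one_le_div_iff (by omega)]
    omega
  have hΔq : Δ = a * q₁ := hΔ
  have hΔpos : 1 ≤ Δ := hΔq ▸ Nat.mul_pos hapos hq₁pos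
  -- Phase 1 : build a witness of size Δ inside T₁
  have phase1 : ∀ b, b ≤ a → ∃ (l : Fin (b*q₁) → Fin n) (R : Fin (b*q₁) → Finset (Fin n)),
      ntUnion G (b*q₁) l R ∧ Finset.univ.biUnion R ⊆ T₁ ∧
      (Finset.univ.biUnion R).card ≤ b*q₁ + r₁*b := by
    intro b
    induction b with
    | zero =>
      intro _
      have hw : ntUnion G 0 Fin.elim0 Fin.elim0 := ⟨fun j => j.elim0, fun j => j.elim0⟩
      obtain ⟨l', R', hnt', hU'⟩ := cast_witness G (Nat.zero_mul q₁).symm hw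
      refine ⟨l', R', hnt', ?_, ?_⟩ <;> rw [hU'] <;>
        simp [Finset.univ_eq_empty]
    | succ b ihb =>
      intro hb1
      obtain ⟨l₀, R₀, hnt₀, hsub₀, hcard₀⟩ := ihb (by omega)
      have hgoalΔ : (b+1)*q₁ ≤ Δ := by
        rw [hΔq]; exact Nat.mul_le_mul_right _ hb1
      have h03 : (b+1)*q₁ = b*q₁ + q₁ := Nat.succ_mul b q₁
      have hbq : b*q₁ + q₁ ≤ Δ := by omega
      have hbfloor : b ≤ cdiv (Δ-1) q₁ := by
        have h01 : b ≤ (Δ-1)/q₁ := (Nat.le_div_iff_mul_le hq₁pos).2 (by omega)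
        exact le_trans h01 (Nat.div_le_div_right (by omega))
      have h02 : r₁ * b ≤ r₁ * cdiv (Δ-1) q₁ := Nat.mul_le_mul_left _ hbfloor
      obtain ⟨l', R', hnt', hsub', hcard'⟩ := block G T₁ (r₁*b) q₁ r₁ ((b+1)*q₁)
        (fun y' ly Ry hnt hsubT hcard hylt => by
          have hUcard : (Finset.univ.biUnion Ry).card < n₁ := by omega
          have hfresh : (T₁ \ Finset.univ.biUnion Ry).Nonempty := by
            rw [← Finset.card_pos, Finset.card_sdiff_of_subset hsubT]
            omega
          obtain ⟨ι, hι⟩ := hfresh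
          have hι1 := Finset.mem_sdiff.1 hι
          obtain ⟨L, A, hLT, hAT, hLf, hLA, hLne, hLreg, hc⟩ :=
            make_step G hloc₁ hδ₁2 hι1.1 hι1.2
          refine ⟨L, A, hLT, hAT, hLf, hLA, hLne, hLreg, ?_⟩
          rcases hc with hc | hc
          · exact Or.inl hc
          · exact Or.inr ⟨by omega, hc.2⟩)
        q₁ (b*q₁) l₀ R₀ (by omega) hnt₀ hsub₀ (by omega) (by omega) (by omega)
      refine ⟨l', R', hnt', hsub', ?_⟩
      have hmul : r₁ * (b+1) = r₁*b + r₁ := by ring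
      omega
  -- witness at Δ
  obtain ⟨lΔ0, RΔ0, hntΔ0, hsubΔ0, hcardΔ0⟩ := phase1 a le_rfl
  obtain ⟨lΔ, RΔ, hntΔ, hUΔ⟩ := cast_witness G hΔq.symm hntΔ0
  have hwitΔ : ∃ (l : Fin Δ → Fin n) (R : Fin Δ → Finset (Fin n)), ntUnion G Δ l R :=
    ⟨lΔ, RΔ, hntΔ⟩
  have hPhiΔ : Phi G Δ ≤ r₁ * a + Δ := by
    have hle := Phi_le G hntΔ
    rw [hUΔ] at hle
    omega
  -- Phase 2
  have claim : ∀ b, (∃ (l : Fin (min x (Δ + b*q₂)) → Fin n)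
      (R : Fin (min x (Δ + b*q₂)) → Finset (Fin n)), ntUnion G (min x (Δ + b*q₂)) l R) ∧
      Phi G (min x (Δ + b*q₂)) ≤ r₁ * a + r₂ * b + min x (Δ + b*q₂) := by
    intro b
    induction b with
    | zero =>
      have hmin : min x (Δ + 0*q₂) = Δ := by
        simp only [Nat.zero_mul, Nat.add_zero]
        exact min_eq_right hxΔ
      rw [hmin]
      exact ⟨hwitΔ, by omega⟩
    | succ b ihb =>
      have hsucc : (b+1)*q₂ = b*q₂ + q₂ := Nat.succ_mul b q₂
      by_cases hxy : x ≤ Δ + b*q₂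
      · have he1 : min x (Δ + b*q₂) = x := min_eq_left hxy
        have he2 : min x (Δ + (b+1)*q₂) = x := min_eq_left (by omega)
        rw [he2]; rw [he1] at ihb
        obtain ⟨ihw, ihp⟩ := ihb
        refine ⟨ihw, ?_⟩
        have hmul : r₂*(b+1) = r₂*b + r₂ := by ring
        omega
      · set y := min x (Δ + b*q₂) with hy
        have hyeq : y = Δ + b*q₂ := min_eq_right (by omega)
        have hylt : y < x := by omega
        have hyρ : y ≤ rho G k := by omega
        have hyΔ : Δ ≤ y := by omega
        have hρpos : 1 ≤ rho G k := by omega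
        have hρdef : rho G k = sSup {x' | (∃ (l : Fin x' → Fin n)
            (R : Fin x' → Finset (Fin n)), ntUnion G x' l R) ∧ Phi G x' - x' < k} := rfl
        have hSne : {x' | (∃ (l : Fin x' → Fin n) (R : Fin x' → Finset (Fin n)),
            ntUnion G x' l R) ∧ Phi G x' - x' < k}.Nonempty := by
          by_contra hSe
          rw [Set.not_nonempty_iff_eq_empty] at hSe
          rw [hρdef, hSe] at hρpos
          simp at hρpos
        have hbdd : BddAbove {x' | (∃ (l : Fin x' → Fin n) (R : Fin x' → Finset (Fin n)),
            ntUnion G x' l R) ∧ Phi G x' - x' < k} := by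
          refine ⟨n, fun x' hx' => ?_⟩
          obtain ⟨⟨l', R', hnt'⟩, -⟩ := hx'
          exact witness_le_n G hnt'
        have hρmem := Nat.sSup_mem hSne hbdd
        rw [← hρdef] at hρmem
        obtain ⟨⟨lρ, Rρ, hρw⟩, hρk⟩ := hρmem
        obtain ⟨l1, R1, h1, -⟩ := cast_witness G
          (show rho G k = y + (rho G k - y) by omega) hρw
        have hchain := Phi_chain G (rho G k - y) y ⟨l1, R1, h1⟩
        have hPhiyρ : Phi G y + (rho G k - y) ≤ Phi G (rho G k) := by
          have h2' := hchain.2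
          rwa [show y + (rho G k - y) = rho G k by omega] at h2'
        have hCk : Phi G y - y < k := by omega
        obtain ⟨l₀, R₀, h₀, hc₀⟩ := Phi_attained G hchain.1
        have hcard₀ : (Finset.univ.biUnion R₀).card ≤ (Phi G y - y) + y := by omega
        set goal := min x (Δ + (b+1)*q₂) with hgoal
        have hygoal : y ≤ goal := le_min (by omega) (by omega)
        have hgoalq : goal ≤ y + q₂ := le_trans (min_le_right _ _) (by omega)
        obtain ⟨l', R', hnt', hsub', hcard'⟩ := block G Finset.univ (Phi G y - y) q₂ r₂ goal
          (fun y' ly Ry hnt hsubT hcard hy'lt => by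
            have hrb := rank_bound G y' ly Ry hnt
            have hfr : Module.finrank 𝔽 (colSpan G (Finset.univ.biUnion Ry)) < k := by omega
            have hne_univ : Finset.univ.biUnion Ry ≠ Finset.univ := by
              intro he
              rw [he, finrank_colSpan_univ] at hfr
              omega
            obtain ⟨ι, hι⟩ : ∃ ι, ι ∉ Finset.univ.biUnion Ry := by
              by_contra hcon
              push_neg at hcon
              exact hne_univ (Finset.eq_univ_iff_forall.2 hcon)
            have hιT : ι ∈ T₁ ∪ T₂ := by rw [hcover]; exact Finset.mem_univ ι
            rcases Finset.mem_union.1 hιT with hι1 | hι2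
            · obtain ⟨L, A, hLT, hAT, hLf, hLA, hLne, hLreg, hc⟩ :=
                make_step G hloc₁ hδ₁2 hι1 hι
              refine ⟨L, A, Finset.subset_univ _, Finset.subset_univ _, hLf, hLA, hLne,
                hLreg, ?_⟩
              rcases hc with hc | hc
              · exact Or.inl hc
              · exact Or.inr ⟨by omega, le_trans hc.2 hr⟩
            · obtain ⟨L, A, hLT, hAT, hLf, hLA, hLne, hLreg, hc⟩ :=
                make_step G hloc₂ hδ₂ hι2 hι
              refine ⟨L, A, Finset.subset_univ _, Finset.subset_univ _, hLf, hLA, hLne,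
                hLreg, ?_⟩
              rcases hc with hc | hc
              · exact Or.inl hc
              · exact Or.inr ⟨by omega, hc.2⟩)
          q₂ y l₀ R₀ (by omega) h₀ (Finset.subset_univ _) hcard₀ hygoal hgoalq
        refine ⟨⟨l', R', hnt'⟩, ?_⟩
        have hP := Phi_le G hnt'
        have hih := ihb.2
        have hmul : r₂*(b+1) = r₂*b + r₂ := by ring
        omega
  have hfinal := claim (cdiv (x - Δ) q₂)
  have hxmin : min x (Δ + cdiv (x - Δ) q₂ * q₂) = x := min_eq_left (by
    have := le_cdiv_mul (x - Δ) q₂ hq₂pos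
    omega)
  rw [hxmin] at hfinal
  exact hfinal.2
end

section
/- Under the hypotheses r_1⌈n_1/(r_1+δ_1−1)⌉ ≤ k−1 and r_1⌈(Δ−1)/(δ_1−1)⌉ + (Δ−1) < n_1, where Δ = ⌈n_1/(r_1+δ_1−1)⌉(δ_1−1), the quantity ρ = max{x : Φ(x)−x < k} satisfies ρ ≥ Δ for any [n,k,d] code with two (r_i,δ_i)_{i∈{1,2}} localities. -/
open scoped Classical

private lemma cdiv_le_of_le_mul {b L a : ℕ} (hb : 1 ≤ b) (h : a ≤ b * L) : cdiv a b ≤ L := by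
  unfold cdiv
  by_contra hc
  push_neg at hc
  have h2 : (L + 1) * b ≤ a + b - 1 := (Nat.le_div_iff_mul_le (by omega)).mp hc
  have h3 : (L + 1) * b = b * L + b := by ring
  obtain ⟨P, hP⟩ : ∃ P, P = b * L := ⟨_, rfl⟩
  rw [← hP] at h h3
  omega

private lemma le_cdiv_mul_s7 {a b : ℕ} (hb : 1 ≤ b) : a ≤ cdiv a b * b := by
  unfold cdiv
  have hd := Nat.div_add_mod (a + b - 1) b
  have hm : (a + b - 1) % b < b := Nat.mod_lt _ (by omega)
  obtain ⟨P, hP⟩ : ∃ P, P = b * ((a + b - 1) / b) := ⟨_, rfl⟩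
  obtain ⟨M, hM⟩ : ∃ M, M = (a + b - 1) % b := ⟨_, rfl⟩
  rw [← hP, ← hM] at hd
  rw [← hM] at hm
  rw [mul_comm, ← hP]
  omega

private lemma chain_exists {𝔽 : Type*} [Field 𝔽] {m n : ℕ} (G : Matrix (Fin m) (Fin n) 𝔽)
    (T₁ : Finset (Fin n)) (r₁ δ₁ : ℕ) (hδ₁ : 2 ≤ δ₁)
    (hloc₁ : hasLocality G T₁ r₁ δ₁) :
    ∀ (N : ℕ) (U : Finset (Fin n)), (T₁ \ U).card ≤ N →
    ∃ items : List (Fin n × Finset (Fin n)),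
      (∀ p ∈ items, regenSet G p.1 p.2 ∧ p.2 ⊆ T₁ ∧ p.1 ∉ U) ∧
      items.Pairwise (fun p p' => p'.1 ∉ p.2) ∧
      (δ₁ - 1) * (T₁ \ U).card ≤ (r₁ + δ₁ - 1) * items.length := by
  intro N
  induction N with
  | zero =>
    intro U hU
    exact ⟨[], by simp, by simp, by simp [Nat.le_zero.mp hU]⟩
  | succ N ih =>
    intro U hU
    rcases (T₁ \ U).eq_empty_or_nonempty with he | ⟨ι, hι⟩
    · exact ⟨[], by simp, by simp, by simp [he]⟩
    have hιT : ι ∈ T₁ := (Finset.mem_sdiff.mp hι).1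
    have hιU : ι ∉ U := (Finset.mem_sdiff.mp hι).2
    obtain ⟨S, hST, hιS, hScard₁, hScard₂, hSE⟩ := hloc₁ ι hιT
    set F : Finset (Fin n) := S \ U with hF
    have hιF : ι ∈ F := Finset.mem_sdiff.mpr ⟨hιS, hιU⟩
    obtain ⟨F', hF'F, hF'card⟩ : ∃ F' ⊆ F, F'.card = min F.card (δ₁ - 1) :=
      Finset.exists_subset_card_eq (min_le_left _ _)
    have hF'S : F' ⊆ S := hF'F.trans Finset.sdiff_subset
    have hF'q : F'.card ≤ δ₁ - 1 := by rw [hF'card]; exact min_le_right _ _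
    obtain ⟨E, hFE, hES, hEcard⟩ :=
      Finset.exists_subsuperset_card_eq hF'S hF'q (by omega : δ₁ - 1 ≤ S.card)
    -- recursive call
    have hcard' : (T₁ \ (U ∪ S)).card ≤ N := by
      have hlt : (T₁ \ (U ∪ S)).card < (T₁ \ U).card := by
        apply Finset.card_lt_card
        constructor
        · intro x hx
          simp only [Finset.mem_sdiff, Finset.mem_union] at hx ⊢
          exact ⟨hx.1, fun h => hx.2 (Or.inl h)⟩
        · intro hcon
          have h2 := hcon hι
          simp [Finset.mem_sdiff, Finset.mem_union, hιS] at h2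
      omega
    obtain ⟨tail, htail₁, htail₂, htail₃⟩ := ih (U ∪ S) hcard'
    refine ⟨F'.toList.map (fun l => (l, (S \ E) ∪ {l})) ++ tail, ?_, ?_, ?_⟩
    · intro p hp
      rcases List.mem_append.mp hp with hp | hp
      · obtain ⟨lv, hlv, rfl⟩ := List.mem_map.mp hp
        have hlvF' : lv ∈ F' := Finset.mem_toList.mp hlv
        have hlvS : lv ∈ S := hF'S hlvF'
        refine ⟨hSE E hES hEcard lv (hFE hlvF'), ?_, ?_⟩
        · exact Finset.union_subset (Finset.sdiff_subset.trans hST)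
            (Finset.singleton_subset_iff.mpr (hST hlvS))
        · have := hF'F hlvF'
          exact (Finset.mem_sdiff.mp this).2
      · obtain ⟨h1, h2, h3⟩ := htail₁ p hp
        exact ⟨h1, h2, fun hc => h3 (Finset.mem_union.mpr (Or.inl hc))⟩
    · rw [List.pairwise_append]
      refine ⟨?_, htail₂, ?_⟩
      · rw [List.pairwise_map]
        refine List.Pairwise.imp_of_mem ?_ (Finset.nodup_toList F')
        intro av bv haL hbL hne
        have hbE : bv ∈ E := hFE (Finset.mem_toList.mp hbL)
        simp only [Finset.mem_union, Finset.mem_sdiff, Finset.mem_singleton]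
        push_neg
        exact ⟨fun _ => hbE, hne.symm⟩
      · intro p hp p' hp'
        obtain ⟨lv, hlv, rfl⟩ := List.mem_map.mp hp
        have hlvS : lv ∈ S := hF'S (Finset.mem_toList.mp hlv)
        intro hc
        have hpS : p'.1 ∈ S := by
          rcases Finset.mem_union.mp hc with h | h
          · exact (Finset.mem_sdiff.mp h).1
          · rw [Finset.mem_singleton.mp h]; exact hlvS
        exact (htail₁ p' hp').2.2 (Finset.mem_union.mpr (Or.inr hpS))
    · have hlen : (F'.toList.map (fun l => (l, (S \ E) ∪ {l})) ++ tail).length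
          = F'.card + tail.length := by
        simp
      rw [hlen]
      have hA0 : T₁ \ U ⊆ F ∪ (T₁ \ (U ∪ S)) := by
        intro x hx
        simp only [Finset.mem_sdiff] at hx
        by_cases hxS : x ∈ S
        · exact Finset.mem_union.mpr (Or.inl (Finset.mem_sdiff.mpr ⟨hxS, hx.2⟩))
        · refine Finset.mem_union.mpr (Or.inr (Finset.mem_sdiff.mpr ⟨hx.1, ?_⟩))
          intro hc
          rcases Finset.mem_union.mp hc with h | h
          · exact hx.2 h
          · exact hxS h
      have hA : (T₁ \ U).card ≤ F.card + (T₁ \ (U ∪ S)).card :=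
        le_trans (Finset.card_le_card hA0) (Finset.card_union_le _ _)
      have hFs : F.card ≤ r₁ + δ₁ - 1 :=
        le_trans (Finset.card_le_card Finset.sdiff_subset) hScard₂
      have hB : (δ₁ - 1) * F.card ≤ (r₁ + δ₁ - 1) * F'.card := by
        rcases le_or_gt F.card (δ₁ - 1) with hle | hlt
        · rw [min_eq_left hle] at hF'card
          rw [hF'card]
          exact Nat.mul_le_mul (by omega) le_rfl
        · rw [min_eq_right (le_of_lt hlt)] at hF'card
          calc (δ₁ - 1) * F.card ≤ (δ₁ - 1) * (r₁ + δ₁ - 1) := Nat.mul_le_mul le_rfl hFs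
            _ = (r₁ + δ₁ - 1) * (δ₁ - 1) := mul_comm _ _
            _ = (r₁ + δ₁ - 1) * F'.card := by rw [hF'card]
      calc (δ₁ - 1) * (T₁ \ U).card
          ≤ (δ₁ - 1) * (F.card + (T₁ \ (U ∪ S)).card) := Nat.mul_le_mul le_rfl hA
        _ = (δ₁ - 1) * F.card + (δ₁ - 1) * (T₁ \ (U ∪ S)).card := Nat.mul_add _ _ _
        _ ≤ (r₁ + δ₁ - 1) * F'.card + (r₁ + δ₁ - 1) * tail.length := Nat.add_le_add hB htail₃
        _ = (r₁ + δ₁ - 1) * (F'.card + tail.length) := (Nat.mul_add _ _ _).symm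
/-- under the hypotheses of Lemma 3.1, `ρ ≥ Δ`. -/
theorem rho_ge_Delta {𝔽 : Type*} [Field 𝔽] {m n : ℕ}
    (G : Matrix (Fin m) (Fin n) 𝔽) (k : ℕ)
    (hk : k = Module.finrank 𝔽 (rowCode G))
    (T₁ T₂ : Finset (Fin n)) (n₁ n₂ r₁ r₂ δ₁ δ₂ : ℕ)
    (hdisj : Disjoint T₁ T₂) (hcover : T₁ ∪ T₂ = Finset.univ)
    (hn₁ : T₁.card = n₁) (hn₂ : T₂.card = n₂)
    (hr : r₁ ≤ r₂) (hδ : δ₂ ≤ δ₁) (hδ₂ : 2 ≤ δ₂)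
    (hloc₁ : hasLocality G T₁ r₁ δ₁) (hloc₂ : hasLocality G T₂ r₂ δ₂)
    (Δ : ℕ) (hΔ : Δ = cdiv n₁ (r₁ + δ₁ - 1) * (δ₁ - 1))
    (h1 : r₁ * cdiv n₁ (r₁ + δ₁ - 1) ≤ k - 1)
    (h2 : r₁ * cdiv (Δ - 1) (δ₁ - 1) + (Δ - 1) < n₁) :
    Δ ≤ rho G k := by
  rcases Nat.eq_zero_or_pos Δ with h0 | hΔpos
  · exact h0 ▸ Nat.zero_le _
  obtain ⟨a, ha⟩ : ∃ a, a = cdiv n₁ (r₁ + δ₁ - 1) := ⟨_, rfl⟩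
  rw [← ha] at hΔ h1
  obtain ⟨ra, hra⟩ : ∃ x, x = r₁ * a := ⟨_, rfl⟩
  rw [← hra] at h1
  have hδ₁ : 2 ≤ δ₁ := hδ₂.trans hδ
  have ha1 : 1 ≤ a := by
    rcases Nat.eq_zero_or_pos a with h | h
    · rw [h, zero_mul] at hΔ; omega
    · exact h
  have hn₁pos : 1 ≤ n₁ := by
    by_contra h0
    have hn0 : n₁ = 0 := by omega
    rw [hn0] at ha
    unfold cdiv at ha
    rw [Nat.div_eq_of_lt (by omega)] at ha
    omega
  obtain ⟨ι0, hι0⟩ : T₁.Nonempty := Finset.card_pos.mp (by omega)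
  obtain ⟨S0, hS0T, hι0S, hS0a, hS0b, -⟩ := hloc₁ ι0 hι0
  have hr₁pos : 1 ≤ r₁ := by
    have := Finset.card_pos.mpr ⟨ι0, hι0S⟩
    omega
  have hrapos : 1 ≤ ra := by
    rw [hra]
    exact Nat.one_le_iff_ne_zero.mpr (Nat.mul_ne_zero (by omega) (by omega))
  have hk2 : 2 ≤ k := by omega
  obtain ⟨items, hmem, hpair, hcount⟩ :=
    chain_exists G T₁ r₁ δ₁ hδ₁ hloc₁ (T₁ \ ∅).card ∅ le_rfl
  rw [Finset.sdiff_empty, hn₁] at hcount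
  have e2 : a * (r₁ + δ₁ - 1) = ra + Δ := by
    have e3 : r₁ + δ₁ - 1 = r₁ + (δ₁ - 1) := by omega
    rw [e3, Nat.mul_add, hΔ, hra, mul_comm a r₁]
  have hL : Δ ≤ items.length := by
    rcases Nat.lt_or_ge δ₁ 3 with hd3 | hd3
    · have hq1 : δ₁ - 1 = 1 := by omega
      rw [hq1, one_mul] at hcount
      have h6 : a ≤ items.length := by
        rw [ha]; exact cdiv_le_of_le_mul (by omega) hcount
      rw [hΔ, hq1, mul_one]; exact h6
    · have e1 : Δ - 1 + (δ₁ - 1) - 1 = (δ₁ - 1) * a + (δ₁ - 3) := by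
        rw [mul_comm, ← hΔ]; omega
      have hcd : cdiv (Δ - 1) (δ₁ - 1) = a := by
        unfold cdiv
        rw [e1, Nat.mul_add_div (by omega), Nat.div_eq_of_lt (by omega), add_zero]
      rw [hcd, ← hra] at h2
      have hge : a * (r₁ + δ₁ - 1) ≤ n₁ := by rw [e2]; omega
      have hsL : (r₁ + δ₁ - 1) * Δ ≤ (r₁ + δ₁ - 1) * items.length := by
        calc (r₁ + δ₁ - 1) * Δ = (δ₁ - 1) * (a * (r₁ + δ₁ - 1)) := by rw [hΔ]; ring
          _ ≤ (δ₁ - 1) * n₁ := Nat.mul_le_mul le_rfl hge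
          _ ≤ (r₁ + δ₁ - 1) * items.length := hcount
      exact Nat.le_of_mul_le_mul_left hsL (by omega)
  set l : Fin Δ → Fin n := fun j => (items.get ⟨j.1, lt_of_lt_of_le j.2 hL⟩).1 with hl
  set R : Fin Δ → Finset (Fin n) := fun j => (items.get ⟨j.1, lt_of_lt_of_le j.2 hL⟩).2 with hR
  have hnt : ntUnion G Δ l R := by
    constructor
    · intro j
      exact (hmem _ (List.get_mem items _)).1
    · intro j j' hlt
      exact List.pairwise_iff_get.mp hpair ⟨j'.1, lt_of_lt_of_le j'.2 hL⟩
        ⟨j.1, lt_of_lt_of_le j.2 hL⟩ hlt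
  have hPhi : Phi G Δ ≤ n₁ := by
    have hc : (Finset.univ.biUnion R).card ≤ n₁ := by
      rw [← hn₁]
      refine Finset.card_le_card (Finset.biUnion_subset.mpr fun j _ => ?_)
      exact (hmem _ (List.get_mem items _)).2.1
    refine le_trans ?_ hc
    unfold Phi
    exact Nat.sInf_le ⟨l, R, hnt, rfl⟩
  have hmemSet : Δ ∈ {x | (∃ (l : Fin x → Fin n) (R : Fin x → Finset (Fin n)),
      ntUnion G x l R) ∧ Phi G x - x < k} := by
    refine ⟨⟨l, R, hnt⟩, ?_⟩
    have h4 : n₁ ≤ ra + Δ := by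
      rw [← e2, ha]; exact le_cdiv_mul_s7 (by omega)
    calc Phi G Δ - Δ ≤ n₁ - Δ := Nat.sub_le_sub_right hPhi Δ
      _ ≤ ra + Δ - Δ := Nat.sub_le_sub_right h4 Δ
      _ = ra := by omega
      _ ≤ k - 1 := h1
      _ < k := by omega
  have hbdd : BddAbove {x : ℕ | (∃ (l : Fin x → Fin n) (R : Fin x → Finset (Fin n)),
      ntUnion G x l R) ∧ Phi G x - x < k} := by
    refine ⟨n, fun x hx => ?_⟩
    obtain ⟨⟨l', R', hnt'⟩, -⟩ := hx
    have hinj : Function.Injective l' := by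
      intro j j' hjj
      by_contra hne
      rcases Ne.lt_or_gt hne with hlt | hlt
      · exact hnt'.2 j' j hlt (by rw [← hjj]; exact (hnt'.1 j).1)
      · exact hnt'.2 j j' hlt (by rw [hjj]; exact (hnt'.1 j').1)
    simpa using Fintype.card_le_of_injective l' hinj
  unfold rho
  exact le_csSup hbdd hmemSet
end

section
/- For an [n,k,d] linear code with two (r_i,δ_i)_{i∈{1,2}} localities, if r_1⌈n_1/(r_1+δ_1−1)⌉ ≤ k−1 and r_1⌈(Δ−1)/(δ_1−1)⌉+(Δ−1) < n_1 with Δ = ⌈n_1/(r_1+δ_1−1)⌉(δ_1−1), then d ≤ n − k + 1 − ⌈n_1/(r_1+δ_1−1)⌉(δ_1−1) − (⌈(k − r_1⌈n_1/(r_1+δ_1−1)⌉)/r_2⌉ − 1)(δ_2−1). -/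
open scoped Classical

namespace SBTL

open Matrix

variable {𝔽 : Type*} [Field 𝔽] {m n : ℕ}

def col (G : Matrix (Fin m) (Fin n) 𝔽) (j : Fin n) : Fin m → 𝔽 := fun t => G t j

noncomputable def rk (G : Matrix (Fin m) (Fin n) 𝔽) (U : Finset (Fin n)) : ℕ :=
  Module.finrank 𝔽 (Submodule.span 𝔽 (col G '' ↑U))

lemma rk_mono (G : Matrix (Fin m) (Fin n) 𝔽) {U V : Finset (Fin n)} (h : U ⊆ V) :
    rk G U ≤ rk G V :=
  Submodule.finrank_mono (Submodule.span_mono (Set.image_mono (by exact_mod_cast h)))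

lemma rk_empty (G : Matrix (Fin m) (Fin n) 𝔽) : rk G ∅ = 0 := by
  simp [rk]

lemma rk_le_card (G : Matrix (Fin m) (Fin n) 𝔽) (U : Finset (Fin n)) : rk G U ≤ U.card := by
  have h : col G '' ↑U = ↑(U.image (col G)) := (Finset.coe_image).symm
  rw [rk, h]
  exact le_trans (finrank_span_finset_le_card _) Finset.card_image_le

lemma rk_union_le_card (G : Matrix (Fin m) (Fin n) 𝔽) (U V : Finset (Fin n)) :
    rk G (U ∪ V) ≤ rk G U + V.card := by
  have h : (Submodule.span 𝔽 (col G '' ↑(U ∪ V))) =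
      Submodule.span 𝔽 (col G '' ↑U) ⊔ Submodule.span 𝔽 (col G '' ↑V) := by
    rw [Finset.coe_union, Set.image_union, Submodule.span_union]
  have h2 := Submodule.finrank_sup_add_finrank_inf_eq
    (Submodule.span 𝔽 (col G '' ↑U)) (Submodule.span 𝔽 (col G '' ↑V))
  have h3 := rk_le_card G V
  rw [rk, h]
  unfold rk at h3 ⊢
  omega

lemma rk_insert_le (G : Matrix (Fin m) (Fin n) 𝔽) (U : Finset (Fin n)) (j : Fin n) :
    rk G (insert j U) ≤ rk G U + 1 := by
  have h : insert j U = U ∪ {j} := by ext x; simp [or_comm]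
  rw [h]
  simpa using rk_union_le_card G U {j}

lemma rk_absorb (G : Matrix (Fin m) (Fin n) 𝔽) {U S E : Finset (Fin n)} (hES : E ⊆ S)
    (hE : ∀ j ∈ E, col G j ∈ Submodule.span 𝔽 (col G '' ↑(U ∪ (S \ E)))) :
    rk G (U ∪ S) ≤ rk G (U ∪ (S \ E)) := by
  apply Submodule.finrank_mono
  rw [Submodule.span_le]
  rintro x ⟨j, hj, rfl⟩
  by_cases hjE : j ∈ E
  · exact hE j hjE
  · apply Submodule.subset_span
    refine ⟨j, ?_, rfl⟩
    simp only [Finset.coe_union, Finset.coe_sdiff, Set.mem_union] at hj ⊢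
    rcases hj with h | h
    · exact Or.inl h
    · exact Or.inr ⟨h, hjE⟩

lemma regen_col (G : Matrix (Fin m) (Fin n) 𝔽) {S E : Finset (Fin n)} {δ : ℕ}
    (hreg : ∀ E ⊆ S, E.card = δ - 1 → ∀ j ∈ E, regenSet G j ((S \ E) ∪ {j}))
    (hES : E ⊆ S) (hcard : E.card = δ - 1) {j : Fin n} (hj : j ∈ E) :
    col G j ∈ Submodule.span 𝔽 (col G '' ↑(S \ E)) := by
  have h := (hreg E hES hcard j hj).2
  have herase : ((S \ E) ∪ {j}).erase j = S \ E := by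
    ext x
    simp only [Finset.mem_erase, Finset.mem_union, Finset.mem_singleton, Finset.mem_sdiff]
    constructor
    · rintro ⟨hne, h | rfl⟩
      · exact h
      · exact absurd rfl hne
    · rintro ⟨hxS, hxE⟩
      exact ⟨fun h => hxE (h ▸ hj), Or.inl ⟨hxS, hxE⟩⟩
  rw [herase] at h
  exact h

/-- Key step lemma. -/
lemma step (G : Matrix (Fin m) (Fin n) 𝔽) {S : Finset (Fin n)} {δ r : ℕ} (hδ2 : 2 ≤ δ)
    (hSc : δ ≤ S.card) (hSr : S.card ≤ r + δ - 1)
    (hreg : ∀ E ⊆ S, E.card = δ - 1 → ∀ j ∈ E, regenSet G j ((S \ E) ∪ {j}))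
    (U : Finset (Fin n)) (hne : (S \ U).Nonempty) :
    U.card < (U ∪ S).card ∧
    (rk G (U ∪ S) ≤ rk G U ∨
      (rk G (U ∪ S) + (δ - 1) + U.card ≤ rk G U + (U ∪ S).card ∧
        rk G (U ∪ S) ≤ rk G U + r)) := by
  classical
  have hUS : U ∪ S = U ∪ (S \ U) := (Finset.union_sdiff_self_eq_union).symm
  have hdisj : Disjoint U (S \ U) := Finset.disjoint_sdiff
  have hcardUS : (U ∪ S).card = U.card + (S \ U).card := by
    rw [hUS, Finset.card_union_of_disjoint hdisj]
  have hlt : U.card < (U ∪ S).card := by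
    have := Finset.card_pos.mpr hne
    omega
  refine ⟨hlt, ?_⟩
  by_cases hcase : (S \ U).card < δ - 1
  · -- few new coordinates: rank does not grow
    obtain ⟨E, hE1, hE2, hE3⟩ := Finset.exists_subsuperset_card_eq
      (Finset.sdiff_subset : S \ U ⊆ S) (le_of_lt hcase) (by omega)
    left
    have hSEU : S \ E ⊆ U := by
      intro x hx
      rw [Finset.mem_sdiff] at hx
      by_contra hxU
      exact hx.2 (hE1 (Finset.mem_sdiff.mpr ⟨hx.1, hxU⟩))
    have habs := rk_absorb G (U := U) hE2 (fun j hj => by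
      have h := regen_col G hreg hE2 hE3 hj
      exact Submodule.span_mono (Set.image_mono (by
        intro x hx
        simp only [Finset.coe_union, Set.mem_union] at hx ⊢
        exact Or.inr hx)) h)
    have hUSE : U ∪ (S \ E) = U := Finset.union_eq_left.mpr hSEU
    rw [hUSE] at habs
    exact habs
  · -- many new coordinates
    push_neg at hcase
    obtain ⟨E, hE1, hE3⟩ := Finset.exists_subset_card_eq (s := S \ U) (n := δ - 1) hcase
    have hE2 : E ⊆ S := hE1.trans Finset.sdiff_subset
    right
    have habs := rk_absorb G (U := U) hE2 (fun j hj => by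
      have h := regen_col G hreg hE2 hE3 hj
      exact Submodule.span_mono (Set.image_mono (by
        intro x hx
        simp only [Finset.coe_union, Set.mem_union] at hx ⊢
        exact Or.inr hx)) h)
    have heq : U ∪ (S \ E) = U ∪ ((S \ E) \ U) := (Finset.union_sdiff_self_eq_union).symm
    have hb : rk G (U ∪ (S \ E)) ≤ rk G U + ((S \ E) \ U).card := by
      rw [heq]; exact rk_union_le_card G U _
    have hswap : (S \ E) \ U = (S \ U) \ E := by
      ext x; simp only [Finset.mem_sdiff]; tauto
    have hcardE : ((S \ U) \ E).card = (S \ U).card - (δ - 1) := by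
      rw [Finset.card_sdiff_of_subset hE1, hE3]
    have hSU_le : (S \ U).card ≤ S.card := Finset.card_le_card Finset.sdiff_subset
    have h1 : rk G (U ∪ S) ≤ rk G U + ((S \ U).card - (δ - 1)) := by
      rw [← hcardE, ← hswap]
      exact habs.trans hb
    constructor
    · omega
    · omega

lemma rk_univ (G : Matrix (Fin m) (Fin n) 𝔽) :
    rk G Finset.univ = Module.finrank 𝔽 (rowCode G) := by
  have h1 : rowCode G = LinearMap.range G.vecMulLinear := by
    rw [rowCode, range_vecMulLinear]
    rfl
  have h2 : G.vecMulLinear = Gᵀ.mulVecLin := (Matrix.mulVecLin_transpose G).symm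
  have h3 : Module.finrank 𝔽 (rowCode G) = Gᵀ.rank := by
    rw [h1, h2, Matrix.rank]
  rw [h3, Matrix.rank_transpose, Matrix.rank]
  have h4 : LinearMap.range G.mulVecLin = Submodule.span 𝔽 (col G '' ↑(Finset.univ : Finset (Fin n))) := by
    rw [Matrix.range_mulVecLin]
    congr 1
    rw [Finset.coe_univ, Set.image_univ]
    rfl
  rw [rk, h4]

lemma exists_codeword (G : Matrix (Fin m) (Fin n) 𝔽) {U : Finset (Fin n)}
    (h : rk G U < Module.finrank 𝔽 (rowCode G)) :
    ∃ c ∈ rowCode G, c ≠ 0 ∧ ∀ j ∈ U, c j = 0 := by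
  classical
  set MU : Matrix {x // x ∈ U} (Fin m) 𝔽 := Matrix.of (fun j t => G t j.val) with hMU
  -- rank of MU equals rk G U
  have hrows : Set.range MU = col G '' ↑U := by
    rw [Set.image_eq_range]
    rfl
  have hrank1 : MU.rank = rk G U := by
    rw [← Matrix.rank_transpose, Matrix.rank, Matrix.range_mulVecLin]
    change Module.finrank 𝔽 (Submodule.span 𝔽 (Set.range MU)) = rk G U
    rw [hrows, rk]
  -- rank-nullity for both maps
  have hrn1 := LinearMap.finrank_range_add_finrank_ker MU.mulVecLin
  have hrn2 := LinearMap.finrank_range_add_finrank_ker G.vecMulLinear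
  have hrange2 : LinearMap.range G.vecMulLinear = rowCode G := by
    rw [rowCode, range_vecMulLinear]
    rfl
  have hk2 : Module.finrank 𝔽 ↥(LinearMap.range G.vecMulLinear)
      = Module.finrank 𝔽 (rowCode G) := by rw [hrange2]
  have hk1 : Module.finrank 𝔽 ↥(LinearMap.range MU.mulVecLin) = rk G U := by
    rw [← hrank1, Matrix.rank]
  have hker : ¬ (LinearMap.ker MU.mulVecLin ≤ LinearMap.ker G.vecMulLinear) := by
    intro hle
    have := Submodule.finrank_mono hle
    omega
  rw [SetLike.not_le_iff_exists] at hker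
  obtain ⟨x, hx1, hx2⟩ := hker
  refine ⟨G.vecMulLinear x, ?_, ?_, ?_⟩
  · rw [← hrange2]; exact ⟨x, rfl⟩
  · intro hc
    exact hx2 (LinearMap.mem_ker.mpr hc)
  · intro j hj
    have h0 : MU.mulVecLin x = 0 := LinearMap.mem_ker.mp hx1
    have h1 := congrFun h0 ⟨j, hj⟩
    simp only [Matrix.mulVecLin_apply, Matrix.mulVec, dotProduct, hMU, Matrix.of_apply,
      Pi.zero_apply] at h1
    rw [Matrix.vecMulLinear_apply]
    show dotProduct x (fun t => G t j) = 0
    rw [dotProduct]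
    rw [← h1]
    exact Finset.sum_congr rfl (fun t _ => mul_comm _ _)

lemma minDist_le_of_codeword (G : Matrix (Fin m) (Fin n) 𝔽) {U : Finset (Fin n)}
    {c : Fin n → 𝔽} (hc : c ∈ rowCode G) (h0 : c ≠ 0) (hz : ∀ j ∈ U, c j = 0) :
    minDist (rowCode G) + U.card ≤ n := by
  have h1 : minDist (rowCode G) ≤ wt c := Nat.sInf_le ⟨c, hc, h0, rfl⟩
  have h2 : wt c ≤ n - U.card := by
    rw [wt]
    have hsub : (Finset.univ.filter fun j => c j ≠ 0) ⊆ Finset.univ \ U := by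
      intro j hjmem
      rw [Finset.mem_filter] at hjmem
      rw [Finset.mem_sdiff]
      exact ⟨Finset.mem_univ _, fun hjU => hjmem.2 (hz j hjU)⟩
    have := Finset.card_le_card hsub
    rw [Finset.card_sdiff_of_subset (Finset.subset_univ U), Finset.card_univ, Fintype.card_fin] at this
    exact this
  have h3 : U.card ≤ n := by
    have := Finset.card_le_univ U
    rwa [Fintype.card_fin] at this
  omega

lemma cdiv_pos {a b : ℕ} (ha : 1 ≤ a) (hb : 1 ≤ b) : 1 ≤ cdiv a b := by
  rw [cdiv, Nat.le_div_iff_mul_le hb]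
  omega

lemma le_cdiv {a b c : ℕ} (hb : 1 ≤ b) (h : c * b ≤ a) : c ≤ cdiv a b := by
  rw [cdiv]
  calc c ≤ a / b := (Nat.le_div_iff_mul_le hb).mpr h
  _ ≤ (a + b - 1) / b := Nat.div_le_div_right (by omega)

lemma cdiv_mul_lt {a b : ℕ} (ha : 1 ≤ a) (hb : 1 ≤ b) : (cdiv a b - 1) * b ≤ a - 1 := by
  have h1 : cdiv a b - 1 = (a - 1) / b := by
    rw [cdiv]
    have : a + b - 1 = (a - 1) + b := by omega
    rw [this, Nat.add_div_right _ hb, Nat.add_sub_cancel]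
  rw [h1]
  exact Nat.div_mul_le_self _ _



end SBTL

/-- Theorem 3.1: Singleton-like bound for codes with two
`(rᵢ, δᵢ)`-localities. -/
theorem singleton_bound_two_localities {𝔽 : Type*} [Field 𝔽] {m n : ℕ}
    (G : Matrix (Fin m) (Fin n) 𝔽) (k d : ℕ)
    (hk : k = Module.finrank 𝔽 (rowCode G)) (hd : d = minDist (rowCode G))
    (T₁ T₂ : Finset (Fin n)) (n₁ n₂ r₁ r₂ δ₁ δ₂ : ℕ)
    (hdisj : Disjoint T₁ T₂) (hcover : T₁ ∪ T₂ = Finset.univ)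
    (hn₁ : T₁.card = n₁) (hn₂ : T₂.card = n₂)
    (hr : r₁ ≤ r₂) (hδ : δ₂ ≤ δ₁) (hδ₂ : 2 ≤ δ₂)
    (hloc₁ : hasLocality G T₁ r₁ δ₁) (hloc₂ : hasLocality G T₂ r₂ δ₂)
    (Δ : ℕ) (hΔ : Δ = cdiv n₁ (r₁ + δ₁ - 1) * (δ₁ - 1))
    (h1 : r₁ * cdiv n₁ (r₁ + δ₁ - 1) ≤ k - 1)
    (h2 : r₁ * cdiv (Δ - 1) (δ₁ - 1) + (Δ - 1) < n₁) :
    (d : ℤ) ≤ (n : ℤ) - k + 1 - (cdiv n₁ (r₁ + δ₁ - 1) : ℤ) * ((δ₁ : ℤ) - 1)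
      - ((cdiv (k - r₁ * cdiv n₁ (r₁ + δ₁ - 1)) r₂ : ℤ) - 1) * ((δ₂ : ℤ) - 1) := by
  classical
  set a := cdiv n₁ (r₁ + δ₁ - 1) with ha
  have hδ₁2 : 2 ≤ δ₁ := le_trans hδ₂ hδ
  have hn₁pos : 1 ≤ n₁ := by omega
  have hT₁ne : T₁.Nonempty := by rw [← Finset.card_pos, hn₁]; omega
  obtain ⟨ι₀, hι₀⟩ := hT₁ne
  obtain ⟨S₀, hS₀T, hι₀S, hS₀c, hS₀r, -⟩ := hloc₁ ι₀ hι₀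
  have hr₁ : 1 ≤ r₁ := by omega
  have hr₂ : 1 ≤ r₂ := le_trans hr₁ hr
  have hwpos : 1 ≤ r₁ + δ₁ - 1 := by omega
  have ha1 : 1 ≤ a := SBTL.cdiv_pos hn₁pos hwpos
  have he : 1 ≤ δ₁ - 1 := by omega
  have hΔpos : 1 ≤ Δ := by
    rw [hΔ]; exact Nat.mul_le_mul ha1 he
  have hra1 : 1 ≤ r₁ * a := Nat.mul_le_mul hr₁ ha1
  have hk1 : 1 ≤ k := by omega
  have hh1 : r₁ * a + 1 ≤ k := by omega
  set x := k - r₁ * a with hx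
  have hx1 : 1 ≤ x := by omega
  have hxk : x + r₁ * a = k := by omega
  set b := cdiv x r₂ with hb
  have hb1 : 1 ≤ b := SBTL.cdiv_pos hx1 hr₂
  set B := b - 1 with hB
  have hBb : B + 1 = b := by omega
  have hBr : B * r₂ ≤ x - 1 := SBTL.cdiv_mul_lt hx1 hr₂
  set a' := cdiv (Δ - 1) (δ₁ - 1) with ha'
  have hmar : a * r₁ = r₁ * a := Nat.mul_comm _ _
  have hmar' : a' * r₁ = r₁ * a' := Nat.mul_comm _ _
  have hrkuniv : SBTL.rk G Finset.univ = k := by rw [SBTL.rk_univ, hk]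
  -- step availability inside T₁
  have hstep₁ : ∀ U : Finset (Fin n), ∀ ι ∈ T₁, ι ∉ U → ∃ V, U ⊆ V ∧ V ⊆ U ∪ T₁ ∧
      U.card < V.card ∧ (SBTL.rk G V ≤ SBTL.rk G U ∨
        (SBTL.rk G V + (δ₁ - 1) + U.card ≤ SBTL.rk G U + V.card ∧
          SBTL.rk G V ≤ SBTL.rk G U + r₁)) := by
    intro U ι hιT hιU
    obtain ⟨S, hST, hιS, hSc, hSr, hSreg⟩ := hloc₁ ι hιT
    have hne : (S \ U).Nonempty := ⟨ι, Finset.mem_sdiff.mpr ⟨hιS, hιU⟩⟩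
    obtain ⟨hlt, hcases⟩ := SBTL.step G hδ₁2 hSc hSr hSreg U hne
    exact ⟨U ∪ S, Finset.subset_union_left, Finset.union_subset_union_right hST, hlt, hcases⟩
  -- step availability anywhere, with parameters (r₂, δ₂)
  have hstepA : ∀ U : Finset (Fin n), ∀ ι : Fin n, ι ∉ U → ∃ V, U ⊆ V ∧
      U.card < V.card ∧ (SBTL.rk G V ≤ SBTL.rk G U ∨
        (SBTL.rk G V + (δ₂ - 1) + U.card ≤ SBTL.rk G U + V.card ∧
          SBTL.rk G V ≤ SBTL.rk G U + r₂)) := by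
    intro U ι hιU
    have hmem : ι ∈ T₁ ∪ T₂ := by rw [hcover]; exact Finset.mem_univ ι
    rcases Finset.mem_union.mp hmem with hmem | hmem
    · obtain ⟨V, hV1, -, hV2, hV3⟩ := hstep₁ U ι hmem hιU
      refine ⟨V, hV1, hV2, ?_⟩
      rcases hV3 with hV3 | ⟨hV4, hV5⟩
      · exact Or.inl hV3
      · exact Or.inr ⟨by omega, by omega⟩
    · obtain ⟨S, hST, hιS, hSc, hSr, hSreg⟩ := hloc₂ ι hmem
      have hne : (S \ U).Nonempty := ⟨ι, Finset.mem_sdiff.mpr ⟨hιS, hιU⟩⟩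
      obtain ⟨hlt, hcases⟩ := SBTL.step G hδ₂ hSc hSr hSreg U hne
      exact ⟨U ∪ S, Finset.subset_union_left, hlt, hcases⟩
  -- Phase 1 : build a subset of T₁ with rank ≤ a * r₁ and deficiency ≥ Δ
  have phase1 : ∀ fuel : ℕ, ∀ U : Finset (Fin n), ∀ c : ℕ, U ⊆ T₁ →
      SBTL.rk G U ≤ c * r₁ → SBTL.rk G U + c * (δ₁ - 1) ≤ U.card → c ≤ a →
      T₁.card ≤ U.card + fuel →
      ∃ W : Finset (Fin n), SBTL.rk G W ≤ a * r₁ ∧ SBTL.rk G W + Δ ≤ W.card := by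
    intro fuel
    induction fuel with
    | zero =>
      intro U c hUT hrk hdef hca hfuel
      by_cases hexit : SBTL.rk G U + Δ ≤ U.card
      · exact ⟨U, le_trans hrk (Nat.mul_le_mul_right r₁ hca), hexit⟩
      · exfalso
        have hce : c * (δ₁ - 1) ≤ Δ - 1 := by omega
        have hca' : c ≤ a' := SBTL.le_cdiv he hce
        have hcr : c * r₁ ≤ a' * r₁ := Nat.mul_le_mul_right r₁ hca'
        have hUcard : U.card ≤ T₁.card := Finset.card_le_card hUT
        omega
    | succ f ih =>
      intro U c hUT hrk hdef hca hfuel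
      by_cases hexit : SBTL.rk G U + Δ ≤ U.card
      · exact ⟨U, le_trans hrk (Nat.mul_le_mul_right r₁ hca), hexit⟩
      · have hce : c * (δ₁ - 1) ≤ Δ - 1 := by omega
        have hca' : c ≤ a' := SBTL.le_cdiv he hce
        have hcr : c * r₁ ≤ a' * r₁ := Nat.mul_le_mul_right r₁ hca'
        have hcards : U.card < T₁.card := by omega
        obtain ⟨ι, hιT, hιU⟩ : ∃ ι ∈ T₁, ι ∉ U := by
          by_contra hcon
          push_neg at hcon
          exact absurd (Finset.card_le_card (fun y hy => hcon y hy)) (by omega)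
        obtain ⟨V, hUV, hVT, hltV, hcasesV⟩ := hstep₁ U ι hιT hιU
        have hVT₁ : V ⊆ T₁ := by
          refine hVT.trans ?_
          rw [Finset.union_eq_right.mpr hUT]
        rcases hcasesV with hrV | ⟨hdV, hrV⟩
        · exact ih V c hVT₁ (le_trans hrV hrk) (by omega) hca (by omega)
        · refine ih V (c + 1) hVT₁ ?_ ?_ ?_ (by omega)
          · have hmul : (c + 1) * r₁ = c * r₁ + r₁ := by ring
            omega
          · have hmul : (c + 1) * (δ₁ - 1) = c * (δ₁ - 1) + (δ₁ - 1) := by ring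
            omega
          · by_contra hcon
            push_neg at hcon
            have : a * (δ₁ - 1) ≤ c * (δ₁ - 1) := Nat.mul_le_mul_right _ (by omega)
            omega
  obtain ⟨W₁, hW₁rk, hW₁def⟩ := phase1 T₁.card ∅ 0 (Finset.empty_subset _)
    (by simp [SBTL.rk_empty]) (by rw [SBTL.rk_empty]; simp) (Nat.zero_le _) (by simp)
  -- Phase 2 : extend to deficiency ≥ Δ + B * (δ₂ - 1) keeping rank ≤ a r₁ + B r₂ ≤ k - 1
  have phase2 : ∀ fuel : ℕ, ∀ U : Finset (Fin n), ∀ c : ℕ,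
      SBTL.rk G U ≤ a * r₁ + c * r₂ → SBTL.rk G U + Δ + c * (δ₂ - 1) ≤ U.card → c ≤ B →
      n ≤ U.card + fuel →
      ∃ W : Finset (Fin n), SBTL.rk G W ≤ a * r₁ + B * r₂ ∧
        SBTL.rk G W + Δ + B * (δ₂ - 1) ≤ W.card := by
    intro fuel
    induction fuel with
    | zero =>
      intro U c hrk hdef hcb hfuel
      by_cases hexit : B ≤ c
      · have hcB : c = B := le_antisymm hcb hexit
        rw [hcB] at hrk hdef
        exact ⟨U, hrk, hdef⟩
      · exfalso
        have hUuniv : U = Finset.univ := by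
          apply Finset.eq_univ_of_card
          have := Finset.card_le_univ U
          rw [Fintype.card_fin] at this ⊢
          omega
        rw [hUuniv, hrkuniv] at hrk
        have hcr : c * r₂ ≤ B * r₂ := Nat.mul_le_mul_right _ (by omega)
        omega
    | succ f ih =>
      intro U c hrk hdef hcb hfuel
      by_cases hexit : B ≤ c
      · have hcB : c = B := le_antisymm hcb hexit
        rw [hcB] at hrk hdef
        exact ⟨U, hrk, hdef⟩
      · have hUuniv : U ≠ Finset.univ := by
          intro hU
          rw [hU, hrkuniv] at hrk
          have hcr : c * r₂ ≤ B * r₂ := Nat.mul_le_mul_right _ (by omega)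
          omega
        obtain ⟨ι, hιU⟩ : ∃ ι : Fin n, ι ∉ U := by
          by_contra hcon
          push_neg at hcon
          exact hUuniv (Finset.eq_univ_iff_forall.mpr hcon)
        obtain ⟨V, hUV, hltV, hcasesV⟩ := hstepA U ι hιU
        rcases hcasesV with hrV | ⟨hdV, hrV⟩
        · exact ih V c (le_trans hrV hrk) (by omega) hcb (by omega)
        · refine ih V (c + 1) ?_ ?_ (by omega) (by omega)
          · have hmul : (c + 1) * r₂ = c * r₂ + r₂ := by ring
            omega
          · have hmul : (c + 1) * (δ₂ - 1) = c * (δ₂ - 1) + (δ₂ - 1) := by ring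
            omega
  obtain ⟨W₂, hW₂rk, hW₂def⟩ := phase2 n W₁ 0 (by omega) (by omega) (Nat.zero_le _)
    (by
      have := Finset.card_le_univ W₁
      rw [Fintype.card_fin] at this
      omega)
  have hW₂k : SBTL.rk G W₂ + 1 ≤ k := by omega
  -- Phase 3 : pad with single coordinates until the rank is exactly k - 1
  have phase3 : ∀ fuel : ℕ, ∀ U : Finset (Fin n), SBTL.rk G U + 1 ≤ k →
      SBTL.rk G U + (Δ + B * (δ₂ - 1)) ≤ U.card → n ≤ U.card + fuel →
      ∃ W : Finset (Fin n), SBTL.rk G W + 1 ≤ k ∧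
        (k - 1) + (Δ + B * (δ₂ - 1)) ≤ W.card := by
    intro fuel
    induction fuel with
    | zero =>
      intro U hrk hdef hfuel
      exfalso
      have hUuniv : U = Finset.univ := by
        apply Finset.eq_univ_of_card
        have := Finset.card_le_univ U
        rw [Fintype.card_fin] at this ⊢
        omega
      rw [hUuniv, hrkuniv] at hrk
      omega
    | succ f ih =>
      intro U hrk hdef hfuel
      by_cases hexit : k ≤ SBTL.rk G U + 1
      · exact ⟨U, hrk, by omega⟩
      · have hUuniv : U ≠ Finset.univ := by
          intro hU
          rw [hU, hrkuniv] at hrk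
          omega
        obtain ⟨ι, hιU⟩ : ∃ ι : Fin n, ι ∉ U := by
          by_contra hcon
          push_neg at hcon
          exact hUuniv (Finset.eq_univ_iff_forall.mpr hcon)
        have hins := SBTL.rk_insert_le G U ι
        have hcardins : (insert ι U).card = U.card + 1 := Finset.card_insert_of_notMem hιU
        exact ih (insert ι U) (by omega) (by omega) (by omega)
  obtain ⟨W, hWrk, hWcard⟩ := phase3 n W₂ hW₂k (by omega)
    (by
      have := Finset.card_le_univ W₂
      rw [Fintype.card_fin] at this
      omega)
  -- shortening bound
  have hWlt : SBTL.rk G W < Module.finrank 𝔽 (rowCode G) := by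
    rw [← hk]; omega
  obtain ⟨c, hcC, hc0, hcz⟩ := SBTL.exists_codeword G hWlt
  have hdn : minDist (rowCode G) + W.card ≤ n := SBTL.minDist_le_of_codeword G hcC hc0 hcz
  rw [← hd] at hdn
  -- final arithmetic over ℤ
  have hfin : d + (k - 1) + (Δ + B * (δ₂ - 1)) ≤ n := by omega
  have hcast1 : (a : ℤ) * ((δ₁ : ℤ) - 1) = (Δ : ℤ) := by
    rw [hΔ, Nat.cast_mul, Nat.cast_sub (by omega : 1 ≤ δ₁), Nat.cast_one]
  have hcast2 : ((b : ℤ) - 1) * ((δ₂ : ℤ) - 1) = ((B * (δ₂ - 1) : ℕ) : ℤ) := by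
    rw [Nat.cast_mul, hB, Nat.cast_sub (by omega : 1 ≤ b), Nat.cast_sub (by omega : 1 ≤ δ₂),
      Nat.cast_one]
  rw [hcast1, hcast2]
  omega
end

section
/- Let C be an [n,k,d] linear code with multiple (r_i,δ_i)_{i∈[s]}-localities (s ≥ 2), with r_1 ≤ ⋯ ≤ r_s, δ_1 ≥ ⋯ ≥ δ_s ≥ 2. Suppose Σ_{i=1}^{s−1} r_i⌈n_i/(r_i+δ_i−1)⌉ ≤ k−1 and for each j ∈ [s−1], r_j⌈(Δ_j−Δ_{j−1}−1)/(δ_j−1)⌉ + (Δ_j−Δ_{j−1}−1) < n_j, where Δ_0 = 0 and Δ_j = Σ_{i=1}^j ⌈n_i/(r_i+δ_i−1)⌉(δ_i−1). Then for each j ∈ [s−1] and Δ_{j−1} ≤ x ≤ Δ_j: Φ(x) ≤ Σ_{i=1}^{j−1} r_i⌈n_i/(r_i+δ_i−1)⌉ + r_j⌈(x−Δ_{j−1})/(δ_j−1)⌉ + x. -/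
open scoped Classical

lemma cdiv_zero' (b : ℕ) : cdiv 0 b = 0 := by
  rcases b with _ | b
  · rfl
  · exact Nat.div_eq_of_lt (by omega)

lemma cdiv_le_cdiv {a a' : ℕ} (b : ℕ) (h : a ≤ a') : cdiv a b ≤ cdiv a' b :=
  Nat.div_le_div_right (by omega)

lemma cdiv_add_self (a : ℕ) {b : ℕ} (hb : 1 ≤ b) : cdiv (a + b) b = cdiv a b + 1 := by
  unfold cdiv
  have h : a + b + b - 1 = (a + b - 1) + b := by omega
  rw [h, Nat.add_div_right _ hb]

lemma cdiv_mul {b : ℕ} (a : ℕ) (hb : 1 ≤ b) : cdiv (a * b) b = a := by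
  induction a with
  | zero => simpa using cdiv_zero' b
  | succ a ih => have : (a+1) * b = a * b + b := by ring
                 rw [this, cdiv_add_self _ hb, ih]

lemma one_le_cdiv {c b : ℕ} (hc : 1 ≤ c) (hb : 1 ≤ b) : 1 ≤ cdiv c b := by
  unfold cdiv
  rw [Nat.one_le_div_iff hb]
  omega

def usets {n : ℕ} (L : List (Fin n × Finset (Fin n))) : Finset (Fin n) :=
  L.foldr (fun p acc => p.2 ∪ acc) ∅

lemma usets_cons {n : ℕ} (a : Fin n × Finset (Fin n)) (L : List (Fin n × Finset (Fin n))) :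
    usets (a :: L) = a.2 ∪ usets L := rfl

lemma mem_usets {n : ℕ} {L : List (Fin n × Finset (Fin n))} {x : Fin n} :
    x ∈ usets L ↔ ∃ p ∈ L, x ∈ p.2 := by
  induction L with
  | nil => simp [usets]
  | cons a L ih => simp [usets_cons, ih]

lemma usets_append {n : ℕ} (L1 L2 : List (Fin n × Finset (Fin n))) :
    usets (L1 ++ L2) = usets L1 ∪ usets L2 := by
  induction L1 with
  | nil => simp [usets]
  | cons a L ih => simp [List.cons_append, usets_cons, ih, Finset.union_assoc]

def goodList {𝔽 : Type*} [Field 𝔽] {m n : ℕ} (G : Matrix (Fin m) (Fin n) 𝔽)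
    (L : List (Fin n × Finset (Fin n))) : Prop :=
  (∀ p ∈ L, regenSet G p.1 p.2) ∧ L.Pairwise fun p q => q.1 ∉ p.2

lemma phi_le_of_goodList {𝔽 : Type*} [Field 𝔽] {m n : ℕ} (G : Matrix (Fin m) (Fin n) 𝔽)
    (L : List (Fin n × Finset (Fin n))) (hL : goodList G L) :
    Phi G L.length ≤ (usets L).card := by
  apply Nat.sInf_le
  refine ⟨fun t => (L.get t).1, fun t => (L.get t).2,
    ⟨fun t => hL.1 _ (L.get_mem t), ?_⟩, ?_⟩
  · intro a b hlt
    exact List.pairwise_iff_get.1 hL.2 b a hlt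
  · congr 1
    ext y
    simp only [Finset.mem_biUnion, Finset.mem_univ, true_and, mem_usets]
    constructor
    · rintro ⟨t, ht⟩; exact ⟨L.get t, L.get_mem t, ht⟩
    · rintro ⟨p, hp, hy⟩
      obtain ⟨t, rfl⟩ := List.mem_iff_get.1 hp
      exact ⟨t, hy⟩

lemma partA {𝔽 : Type*} [Field 𝔽] {m n : ℕ} (G : Matrix (Fin m) (Fin n) 𝔽)
    (T : Finset (Fin n)) (r δ : ℕ) (hδ : 2 ≤ δ) (hloc : hasLocality G T r δ) :
    ∀ c (B : Finset (Fin n)),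
      B.card + c + r * cdiv (c - 1) (δ - 1) ≤ T.card →
      ∃ L : List (Fin n × Finset (Fin n)), goodList G L ∧ L.length = c ∧
        (∀ p ∈ L, p.2 ⊆ T) ∧ (∀ p ∈ L, p.1 ∉ B) ∧
        ((usets L) \ B).card ≤ c + r * cdiv c (δ - 1) := by
  intro c
  induction c using Nat.strong_induction_on with
  | _ c ih =>
  intro B hB
  rcases Nat.eq_zero_or_pos c with rfl | hc
  · exact ⟨[], ⟨fun p hp => absurd hp (List.not_mem_nil), List.Pairwise.nil⟩, rfl,
      fun p hp => absurd hp (List.not_mem_nil), fun p hp => absurd hp (List.not_mem_nil),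
      by simp [usets, cdiv_zero']⟩
  -- find a fresh coordinate
  obtain ⟨ι, hιT, hιB⟩ : ∃ ι, ι ∈ T ∧ ι ∉ B := by
    by_contra h
    push_neg at h
    have hTB : T ⊆ B := fun a ha => h a ha
    have := Finset.card_le_card hTB
    omega
  obtain ⟨S, hST, hιS, hδS, hSr, hEprop⟩ := hloc ι hιT
  set N : Finset (Fin n) := S \ B with hNdef
  have hNS : N ⊆ S := Finset.sdiff_subset
  have hιN : ι ∈ N := Finset.mem_sdiff.2 ⟨hιS, hιB⟩
  have hN1 : 1 ≤ N.card := Finset.card_pos.2 ⟨ι, hιN⟩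
  set u : ℕ := min c (min N.card (δ - 1)) with hu
  have hu1 : 1 ≤ u := by omega
  have huc : u ≤ c := by omega
  -- construct F and E
  obtain ⟨F, E, hFN, hFE, hES, hFcard, hEcard, hgcase⟩ :
      ∃ F E : Finset (Fin n), F ⊆ N ∧ F ⊆ E ∧ E ⊆ S ∧ F.card = u ∧ E.card = δ - 1 ∧
        (((S \ E) \ B).card = 0 ∨ u = min c (δ - 1)) := by
    by_cases hcase : N.card ≤ δ - 1
    · obtain ⟨F, hFN, hFcard⟩ := Finset.exists_subset_card_eq (show u ≤ N.card by omega)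
      obtain ⟨E, hNE, hES, hEcard⟩ :=
        Finset.exists_subsuperset_card_eq hNS hcase (show δ - 1 ≤ S.card by omega)
      refine ⟨F, E, hFN, hFN.trans hNE, hES, hFcard, hEcard, Or.inl ?_⟩
      rw [Finset.card_eq_zero]
      ext a
      simp only [Finset.mem_sdiff, Finset.notMem_empty, iff_false, not_and, and_imp]
      intro haS haE haB
      exact haE (hNE (Finset.mem_sdiff.2 ⟨haS, haB⟩))
    · push_neg at hcase
      obtain ⟨F, hFN, hFcard⟩ := Finset.exists_subset_card_eq (show u ≤ N.card by omega)
      obtain ⟨E, hFE, hEN, hEcard⟩ :=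
        Finset.exists_subsuperset_card_eq hFN (show F.card ≤ δ - 1 by omega)
          (show δ - 1 ≤ N.card by omega)
      exact ⟨F, E, hFN, hFE, hEN.trans hNS, hFcard, hEcard, Or.inr (by omega)⟩
  -- basic facts
  have hδ1 : 1 ≤ δ - 1 := by omega
  set g : ℕ := ((S \ E) \ B).card with hg
  have hgr : g ≤ r := by
    have h1 : (S \ E) \ B ⊆ S \ E := Finset.sdiff_subset
    have h2 := Finset.card_le_card h1
    have h3 : (S \ E).card = S.card - E.card := Finset.card_sdiff_of_subset hES
    omega
  -- the step list
  set step : List (Fin n × Finset (Fin n)) :=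
    F.toList.map (fun f => (f, (S \ E) ∪ {f})) with hstep
  have hstep_mem : ∀ p ∈ step, ∃ f ∈ F, p = (f, (S \ E) ∪ {f}) := by
    intro p hp
    rw [hstep, List.mem_map] at hp
    obtain ⟨f, hf, rfl⟩ := hp
    exact ⟨f, Finset.mem_toList.1 hf, rfl⟩
  have hstep_len : step.length = u := by
    rw [hstep, List.length_map, Finset.length_toList, hFcard]
  have hstep_regen : ∀ p ∈ step, regenSet G p.1 p.2 := by
    intro p hp
    obtain ⟨f, hf, rfl⟩ := hstep_mem p hp
    exact hEprop E hES hEcard f (hFE hf)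
  have hstep_pair : step.Pairwise fun p q => q.1 ∉ p.2 := by
    rw [hstep, List.pairwise_map]
    refine List.Pairwise.imp_of_mem ?_ F.nodup_toList
    intro a b ha hb hne
    have hbF : b ∈ F := Finset.mem_toList.1 hb
    simp only [Finset.mem_union, Finset.mem_sdiff, Finset.mem_singleton]
    push_neg
    exact ⟨fun _ => hFE hbF, hne.symm⟩
  set used : Finset (Fin n) := (S \ E) ∪ F with hused
  have hstep_usets : usets step ⊆ used := by
    intro a ha
    obtain ⟨p, hp, hap⟩ := mem_usets.1 ha
    obtain ⟨f, hf, rfl⟩ := hstep_mem p hp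
    rcases Finset.mem_union.1 hap with h | h
    · exact Finset.mem_union.2 (Or.inl h)
    · rw [Finset.mem_singleton] at h; subst h
      exact Finset.mem_union.2 (Or.inr hf)
  have hstep_sub : ∀ p ∈ step, p.2 ⊆ T := by
    intro p hp
    obtain ⟨f, hf, rfl⟩ := hstep_mem p hp
    intro a ha
    rcases Finset.mem_union.1 ha with h | h
    · exact hST (Finset.mem_sdiff.1 h).1
    · rw [Finset.mem_singleton] at h; subst h
      exact hST (hNS (hFN hf))
  have hstep_notB : ∀ p ∈ step, p.1 ∉ B := by
    intro p hp
    obtain ⟨f, hf, rfl⟩ := hstep_mem p hp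
    exact (Finset.mem_sdiff.1 (hFN hf)).2
  have husedB : (used \ B).card ≤ g + u := by
    have hsub : used \ B ⊆ ((S \ E) \ B) ∪ F := by
      intro a ha
      rw [Finset.mem_sdiff, hused, Finset.mem_union] at ha
      rcases ha.1 with h | h
      · exact Finset.mem_union.2 (Or.inl (Finset.mem_sdiff.2 ⟨h, ha.2⟩))
      · exact Finset.mem_union.2 (Or.inr h)
    calc (used \ B).card ≤ (((S \ E) \ B) ∪ F).card := Finset.card_le_card hsub
      _ ≤ g + u := by
          have := Finset.card_union_le ((S \ E) \ B) F
          omega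
  -- key arithmetic facts
  have key2 : g + r * cdiv (c - u) (δ - 1) ≤ r * cdiv c (δ - 1) := by
    rcases hgcase with h0 | hmin
    · have := cdiv_le_cdiv (a := c - u) (a' := c) (δ - 1) (by omega)
      have := Nat.mul_le_mul_left r this
      omega
    · rcases Nat.lt_or_ge u (min c (δ - 1)) with h | h
      · omega
      rcases Nat.eq_or_lt_of_le huc with heq | hlt
      · have h1 : 1 ≤ cdiv c (δ - 1) := one_le_cdiv hc hδ1
        have h2 := Nat.mul_le_mul_left r h1
        have h3 : c - u = 0 := by omega
        rw [h3, cdiv_zero']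
        omega
      · have huδ : u = δ - 1 := by omega
        have hcd : c - u + (δ - 1) = c := by omega
        have := cdiv_add_self (c - u) hδ1
        rw [hcd] at this
        have hh : r * cdiv c (δ - 1) = r * cdiv (c - u) (δ - 1) + r := by
          rw [this]; ring
        omega
  rcases Nat.eq_or_lt_of_le huc with huceq | hult
  · -- terminal case: u = c, L = step
    refine ⟨step, ⟨hstep_regen, hstep_pair⟩, by omega, hstep_sub, hstep_notB, ?_⟩
    have h1 : usets step \ B ⊆ used \ B := fun a ha => by
      rw [Finset.mem_sdiff] at ha ⊢
      exact ⟨hstep_usets ha.1, ha.2⟩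
    have h2 := Finset.card_le_card h1
    have h3 : r ≤ r * cdiv c (δ - 1) := by
      have := Nat.mul_le_mul_left r (one_le_cdiv hc hδ1)
      omega
    omega
  · -- recursive case: u < c
    have key1 : g + r * cdiv (c - u - 1) (δ - 1) ≤ r * cdiv (c - 1) (δ - 1) := by
      rcases hgcase with h0 | hmin
      · have := cdiv_le_cdiv (a := c - u - 1) (a' := c - 1) (δ - 1) (by omega)
        have := Nat.mul_le_mul_left r this
        omega
      · have huδ : u = δ - 1 := by omega
        have hcd : c - u - 1 + (δ - 1) = c - 1 := by omega
        have := cdiv_add_self (c - u - 1) hδ1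
        rw [hcd] at this
        have hh : r * cdiv (c - 1) (δ - 1) = r * cdiv (c - u - 1) (δ - 1) + r := by
          rw [this]; ring
        omega
    set B' : Finset (Fin n) := B ∪ used with hB'
    have hB'card : B'.card ≤ B.card + g + u := by
      have h1 : B' = B ∪ (used \ B) := by
        rw [hB', Finset.union_sdiff_self_eq_union]
      rw [h1]
      have := Finset.card_union_le B (used \ B)
      omega
    obtain ⟨L', hg', hlen', hsub', hnotB', hcard'⟩ := ih (c - u) (by omega) B' (by omega)
    refine ⟨step ++ L', ⟨?_, ?_⟩, ?_, ?_, ?_, ?_⟩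
    · intro p hp
      rcases List.mem_append.1 hp with h | h
      · exact hstep_regen p h
      · exact hg'.1 p h
    · rw [List.pairwise_append]
      refine ⟨hstep_pair, hg'.2, ?_⟩
      intro p hp q hq
      obtain ⟨f, hf, rfl⟩ := hstep_mem p hp
      intro hcon
      apply hnotB' q hq
      rw [hB', Finset.mem_union]
      right
      rcases Finset.mem_union.1 hcon with h | h
      · exact Finset.mem_union.2 (Or.inl h)
      · rw [Finset.mem_singleton] at h
        exact Finset.mem_union.2 (Or.inr (h ▸ hf))
    · rw [List.length_append, hstep_len, hlen']; omega
    · intro p hp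
      rcases List.mem_append.1 hp with h | h
      · exact hstep_sub p h
      · exact hsub' p h
    · intro p hp
      rcases List.mem_append.1 hp with h | h
      · exact hstep_notB p h
      · intro hcon
        exact hnotB' p h (by rw [hB']; exact Finset.mem_union.2 (Or.inl hcon))
    · have hsubU : usets (step ++ L') \ B ⊆ (used \ B) ∪ (usets L' \ B') := by
        intro a ha
        rw [Finset.mem_sdiff, usets_append, Finset.mem_union] at ha
        rcases ha.1 with h | h
        · exact Finset.mem_union.2 (Or.inl (Finset.mem_sdiff.2 ⟨hstep_usets h, ha.2⟩))
        · by_cases hab : a ∈ B'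
          · rcases Finset.mem_union.1 (hB' ▸ hab) with h2 | h2
            · exact absurd h2 ha.2
            · exact Finset.mem_union.2 (Or.inl (Finset.mem_sdiff.2 ⟨h2, ha.2⟩))
          · exact Finset.mem_union.2 (Or.inr (Finset.mem_sdiff.2 ⟨h, hab⟩))
      have h1 := Finset.card_le_card hsubU
      have h2 := Finset.card_union_le (used \ B) (usets L' \ B')
      omega


/-- Lemma 3.2, first part: bound on `Φ(x)` for codes with multiple
`(rᵢ, δᵢ)`-localities, for `Δ_{j−1} ≤ x ≤ Δ_j`, `j ∈ [s−1]` (here `0`-indexed: `j < s−1`). -/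
theorem phi_bound_multiple_localities {𝔽 : Type*} [Field 𝔽] {m n : ℕ}
    (G : Matrix (Fin m) (Fin n) 𝔽) (k : ℕ)
    (hk : k = Module.finrank 𝔽 (rowCode G))
    (s : ℕ) (hs : 2 ≤ s) (T : ℕ → Finset (Fin n)) (nn r δ : ℕ → ℕ)
    (hdisj : ∀ i < s, ∀ j < s, i ≠ j → Disjoint (T i) (T j))
    (hcover : (Finset.range s).biUnion T = Finset.univ)
    (hcard : ∀ i < s, (T i).card = nn i)
    (hrmono : ∀ i j, i ≤ j → j < s → r i ≤ r j)
    (hδmono : ∀ i j, i ≤ j → j < s → δ j ≤ δ i)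
    (hδ2 : ∀ i < s, 2 ≤ δ i)
    (hloc : ∀ i < s, hasLocality G (T i) (r i) (δ i))
    (Δ : ℕ → ℕ)
    (hΔ : ∀ j, Δ j = ∑ i ∈ Finset.range j, cdiv (nn i) (r i + δ i - 1) * (δ i - 1))
    (h1 : ∑ i ∈ Finset.range (s - 1), r i * cdiv (nn i) (r i + δ i - 1) ≤ k - 1)
    (h2 : ∀ j < s - 1,
      r j * cdiv (Δ (j + 1) - Δ j - 1) (δ j - 1) + (Δ (j + 1) - Δ j - 1) < nn j) :
    ∀ j < s - 1, ∀ x, Δ j ≤ x → x ≤ Δ (j + 1) →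
      Phi G x ≤ (∑ i ∈ Finset.range j, r i * cdiv (nn i) (r i + δ i - 1))
        + r j * cdiv (x - Δ j) (δ j - 1) + x := by
  
  intro j hj x hx1 hx2
  have hjs : j < s := by omega
  set cf : ℕ → ℕ :=
    fun i => if i = j then x - Δ j else cdiv (nn i) (r i + δ i - 1) * (δ i - 1) with hcf
  have hΔsucc : ∀ i, Δ (i + 1) = Δ i + cdiv (nn i) (r i + δ i - 1) * (δ i - 1) := by
    intro i
    rw [hΔ, hΔ, Finset.sum_range_succ]
  have fact1 : ∀ i ≤ j, cf i + r i * cdiv (cf i - 1) (δ i - 1) ≤ nn i := by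
    intro i hi
    have his : i < s - 1 := by omega
    have h2i := h2 i his
    have hdiff : Δ (i + 1) - Δ i = cdiv (nn i) (r i + δ i - 1) * (δ i - 1) := by
      rw [hΔsucc]; omega
    rw [hdiff] at h2i
    set C : ℕ := cdiv (nn i) (r i + δ i - 1) * (δ i - 1) with hC
    have hcfle : cf i ≤ C := by
      by_cases hij : i = j
      · subst hij
        simp only [hcf, if_pos rfl]
        have := hΔsucc i
        omega
      · simp [hcf, hij, hC]
    rcases Nat.eq_zero_or_pos C with hC0 | hC1
    · have h0 : cf i = 0 := by omega
      rw [h0]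
      simp only [Nat.zero_sub, cdiv_zero', Nat.mul_zero]
      omega
    · have hm := cdiv_le_cdiv (δ i - 1) (show cf i - 1 ≤ C - 1 by omega)
      have hm2 := Nat.mul_le_mul_left (r i) hm
      omega
  have main : ∀ t ≤ j + 1, ∃ L : List (Fin n × Finset (Fin n)), goodList G L ∧
      L.length = ∑ i ∈ Finset.range t, cf i ∧
      (∀ p ∈ L, ∃ i, i < t ∧ p.2 ⊆ T i) ∧
      (usets L).card ≤ ∑ i ∈ Finset.range t, (cf i + r i * cdiv (cf i) (δ i - 1)) := by
    intro t
    induction t with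
    | zero =>
      intro _
      exact ⟨[], ⟨fun p hp => absurd hp (List.not_mem_nil), List.Pairwise.nil⟩,
        by simp, fun p hp => absurd hp (List.not_mem_nil), by simp [usets]⟩
    | succ t iht =>
      intro ht
      obtain ⟨L1, hg1, hlen1, hsub1, hcard1⟩ := iht (by omega)
      have hts : t < s := by omega
      obtain ⟨L2, hg2, hlen2, hsub2, hnB2, hcard2⟩ :=
        partA G (T t) (r t) (δ t) (hδ2 t hts) (hloc t hts) (cf t) ∅
          (by
            rw [hcard t hts]
            simpa using fact1 t (by omega))
      refine ⟨L1 ++ L2, ⟨?_, ?_⟩, ?_, ?_, ?_⟩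
      · intro p hp
        rcases List.mem_append.1 hp with h | h
        exacts [hg1.1 p h, hg2.1 p h]
      · rw [List.pairwise_append]
        refine ⟨hg1.2, hg2.2, ?_⟩
        intro p hp q hq
        obtain ⟨i, hit, hpT⟩ := hsub1 p hp
        have hq1 : q.1 ∈ T t := hsub2 q hq (hg2.1 q hq).1
        have hd := hdisj i (by omega) t hts (by omega)
        intro hcon
        exact (Finset.disjoint_left.1 hd (hpT hcon)) hq1
      · rw [List.length_append, hlen1, hlen2, Finset.sum_range_succ]
      · intro p hp
        rcases List.mem_append.1 hp with h | h
        · obtain ⟨i, hit, h'⟩ := hsub1 p h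
          exact ⟨i, by omega, h'⟩
        · exact ⟨t, by omega, hsub2 p h⟩
      · rw [usets_append, Finset.sum_range_succ]
        have h2' : (usets L2).card ≤ cf t + r t * cdiv (cf t) (δ t - 1) := by
          have : usets L2 \ ∅ = usets L2 := by simp
          rw [this] at hcard2
          exact hcard2
        have := Finset.card_union_le (usets L1) (usets L2)
        omega
  obtain ⟨L, hgood, hlen, _, hcard'⟩ := main (j + 1) le_rfl
  have hsum1 : ∑ i ∈ Finset.range j, cf i = Δ j := by
    rw [hΔ]
    refine Finset.sum_congr rfl fun i hi => ?_
    rw [Finset.mem_range] at hi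
    simp [hcf, Nat.ne_of_lt hi]
  have hlenx : L.length = x := by
    rw [hlen, Finset.sum_range_succ, hsum1]
    simp only [hcf, if_pos rfl]
    omega
  have hbound : ∑ i ∈ Finset.range (j + 1), (cf i + r i * cdiv (cf i) (δ i - 1)) =
      (∑ i ∈ Finset.range j, r i * cdiv (nn i) (r i + δ i - 1))
        + r j * cdiv (x - Δ j) (δ j - 1) + x := by
    rw [Finset.sum_range_succ]
    have hre : ∀ i ∈ Finset.range j, cf i + r i * cdiv (cf i) (δ i - 1) =
        cdiv (nn i) (r i + δ i - 1) * (δ i - 1) + r i * cdiv (nn i) (r i + δ i - 1) := by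
      intro i hi
      rw [Finset.mem_range] at hi
      have hne : cf i = cdiv (nn i) (r i + δ i - 1) * (δ i - 1) := by
        simp [hcf, Nat.ne_of_lt hi]
      rw [hne, cdiv_mul _ (by have := hδ2 i (by omega); omega)]
    rw [Finset.sum_congr rfl hre, Finset.sum_add_distrib, ← hΔ]
    simp only [hcf, if_pos rfl]
    omega
  calc Phi G x = Phi G L.length := by rw [hlenx]
    _ ≤ (usets L).card := phi_le_of_goodList G L hgood
    _ ≤ _ := by rw [← hbound]; exact hcard'
end
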